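/- arXiv:2412.10802 — 4 statements merged into one kernel-verified Lean document; each statement's English description precedes it below -/
import Mathlib

section
/- Let m ≤ n be natural numbers with m ≥ 1. Then the cutting map Sym(n) → Sym(m), σ ↦ σ↓Sym(m), is a uniform 2(n−m)/m-homomorphism: for all σ, τ ∈ Sym(n), d_m((στ)↓Sym(m), (σ↓Sym(m))·(τ↓Sym(m))) ≤ 2(n−m)/m. -/
open Filter Equiv Set

namespace SymPaper

/-- The normalized Hamming distance on permutations of `Fin N`:
`d_N(σ,τ) = |{i : σ i ≠ τ i}| / N`. -/
noncomputable def hd {N : ℕ} (σ τ : Equiv.Perm (Fin N)) : ℝ :=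
  ((Finset.univ.filter fun i => σ i ≠ τ i).card : ℝ) / N

lemma hd_nonneg {N : ℕ} (σ τ : Equiv.Perm (Fin N)) : 0 ≤ hd σ τ :=
  div_nonneg (Nat.cast_nonneg _) (Nat.cast_nonneg _)

lemma hd_self {N : ℕ} (σ : Equiv.Perm (Fin N)) : hd σ σ = 0 := by
  simp [hd]

lemma hd_filter_eq_support {N : ℕ} (σ τ : Equiv.Perm (Fin N)) :
    (Finset.univ.filter fun i => σ i ≠ τ i) = (σ⁻¹ * τ).support := by
  ext i
  simp only [Finset.mem_filter, Finset.mem_univ, true_and, Equiv.Perm.mem_support,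
    Equiv.Perm.mul_apply, ne_eq, Equiv.Perm.inv_eq_iff_eq]
  exact not_congr ⟨fun h => h.symm, fun h => h.symm⟩

lemma hd_one {N : ℕ} (σ : Equiv.Perm (Fin N)) :
    hd σ 1 = (σ.support.card : ℝ) / N := by
  unfold hd
  rw [hd_filter_eq_support, mul_one, Equiv.Perm.support_inv]

lemma hd_mul_one_le {N : ℕ} (σ τ : Equiv.Perm (Fin N)) :
    hd (σ * τ) 1 ≤ hd σ 1 + hd τ 1 := by
  rcases Nat.eq_zero_or_pos N with h0 | hpos
  · subst h0; simp [hd]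
  · have hN : (0 : ℝ) < N := by exact_mod_cast hpos
    rw [hd_one, hd_one, hd_one, ← add_div]
    rw [div_le_div_iff_of_pos_right hN]
    have h1 : ((σ * τ).support).card ≤ (σ.support ⊔ τ.support).card :=
      Finset.card_le_card (Equiv.Perm.support_mul_le σ τ)
    have h2 : (σ.support ⊔ τ.support).card ≤ σ.support.card + τ.support.card :=
      Finset.card_union_le _ _
    exact_mod_cast le_trans h1 h2

lemma hd_inv_one {N : ℕ} (σ : Equiv.Perm (Fin N)) : hd σ⁻¹ 1 = hd σ 1 := by
  rw [hd_one, hd_one, Equiv.Perm.support_inv]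

lemma hd_conj_one {N : ℕ} (g σ : Equiv.Perm (Fin N)) :
    hd (g * σ * g⁻¹) 1 = hd σ 1 := by
  rw [hd_one, hd_one, Equiv.Perm.support_conj, Finset.card_map]

/-- The normal subgroup of elements of `∏ n, Sym(k n)` that tend to the identity
along the filter `F`. -/
def symNull (k : ℕ → ℕ) (F : Filter ℕ) : Subgroup (∀ n, Equiv.Perm (Fin (k n))) where
  carrier := {a | Filter.Tendsto (fun n => hd (a n) 1) F (nhds 0)}
  one_mem' := by
    simpa [hd_self] using (tendsto_const_nhds : Filter.Tendsto (fun _ : ℕ => (0:ℝ)) F (nhds 0))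
  mul_mem' := by
    intro a b ha hb
    refine squeeze_zero (fun n => hd_nonneg _ _) (fun n => ?_) (by simpa using ha.add hb)
    exact hd_mul_one_le (a n) (b n)
  inv_mem' := by
    intro a ha
    simpa [hd_inv_one] using ha

instance symNull_normal (k : ℕ → ℕ) (F : Filter ℕ) : (symNull k F).Normal := by
  constructor
  intro a ha g
  show Filter.Tendsto (fun n => hd ((g * a * g⁻¹) n) 1) F (nhds 0)
  have ha' : Filter.Tendsto (fun n => hd (a n) 1) F (nhds 0) := ha
  simpa [hd_conj_one] using ha'

/-- The metric reduced product `Sym[(k n)ₙ]`. -/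
abbrev SymRP (k : ℕ → ℕ) : Type :=
  (∀ n, Equiv.Perm (Fin (k n))) ⧸ symNull k Filter.atTop

/-- The metric ultraproduct `∏ₙ Sym(k n) / U`. -/
abbrev SymUP (k : ℕ → ℕ) (U : Ultrafilter ℕ) : Type :=
  (∀ n, Equiv.Perm (Fin (k n))) ⧸ symNull k (U : Filter ℕ)

/-- Class of a sequence in the metric reduced product. -/
def mkRP {k : ℕ → ℕ} (a : ∀ n, Equiv.Perm (Fin (k n))) : SymRP k :=
  QuotientGroup.mk a

/-- Class of a sequence in the metric ultraproduct. -/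
def mkUP {k : ℕ → ℕ} (U : Ultrafilter ℕ) (a : ∀ n, Equiv.Perm (Fin (k n))) : SymUP k U :=
  QuotientGroup.mk a

section CutLift

lemma cut_exists {n : ℕ} (σ : Equiv.Perm (Fin n)) {m : ℕ} (h : m ≤ n) (i : Fin m) :
    ∃ kk : ℕ, 1 ≤ kk ∧ (((σ ^ kk) (Fin.castLE h i) : Fin n) : ℕ) < m := by
  refine ⟨orderOf σ, orderOf_pos σ, ?_⟩
  rw [pow_orderOf_eq_one]
  simpa using i.2

/-- The underlying function of the cutting `σ ↓ Sym(m)`: it sends `i < m` to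
`σ^k i` for the least `k ≥ 1` with `σ^k i < m`. -/
noncomputable def cutFun {n : ℕ} (σ : Equiv.Perm (Fin n)) {m : ℕ} (h : m ≤ n) (i : Fin m) :
    Fin m :=
  ⟨(((σ ^ (Nat.find (cut_exists σ h i))) (Fin.castLE h i) : Fin n) : ℕ),
    (Nat.find_spec (cut_exists σ h i)).2⟩

lemma cutFun_injective {n : ℕ} (σ : Equiv.Perm (Fin n)) {m : ℕ} (h : m ≤ n) :
    Function.Injective (cutFun σ h) := by
  have key : ∀ i j : Fin m,
      Nat.find (cut_exists σ h i) ≤ Nat.find (cut_exists σ h j) →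
      cutFun σ h i = cutFun σ h j → i = j := by
    intro i j hle hij
    set ki := Nat.find (cut_exists σ h i) with hki
    set kj := Nat.find (cut_exists σ h j) with hkj
    have hv : ((cutFun σ h i : Fin m) : ℕ) = ((cutFun σ h j : Fin m) : ℕ) :=
      congrArg Fin.val hij
    have hval : (σ ^ ki) (Fin.castLE h i) = (σ ^ kj) (Fin.castLE h j) := Fin.ext hv
    have hki1 : 1 ≤ ki := (Nat.find_spec (cut_exists σ h i)).1
    have hkj1 : 1 ≤ kj := (Nat.find_spec (cut_exists σ h j)).1
    have hpow : σ ^ ki * σ ^ (kj - ki) = σ ^ kj := by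
      rw [← pow_add, Nat.add_sub_cancel' hle]
    have h2 : (σ ^ (kj - ki)) (Fin.castLE h j) = Fin.castLE h i := by
      apply (σ ^ ki).injective
      calc (σ ^ ki) ((σ ^ (kj - ki)) (Fin.castLE h j))
          = (σ ^ ki * σ ^ (kj - ki)) (Fin.castLE h j) := rfl
        _ = (σ ^ kj) (Fin.castLE h j) := by rw [hpow]
        _ = (σ ^ ki) (Fin.castLE h i) := hval.symm
    by_cases hzero : kj - ki = 0
    · have hkeq : ki = kj := le_antisymm hle (Nat.sub_eq_zero_iff_le.mp hzero)
      have : Fin.castLE h i = Fin.castLE h j := by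
        apply (σ ^ kj).injective
        rw [← hval, hkeq]
      exact Fin.castLE_injective h this
    · exfalso
      have hlt : kj - ki < kj := Nat.sub_lt (lt_of_lt_of_le Nat.one_pos hkj1) hki1
      have := Nat.find_min (cut_exists σ h j) hlt
      apply this
      refine ⟨Nat.one_le_iff_ne_zero.mpr hzero, ?_⟩
      rw [h2]
      simpa using i.2
  intro i j hij
  rcases le_total (Nat.find (cut_exists σ h i)) (Nat.find (cut_exists σ h j)) with hle | hle
  · exact key i j hle hij
  · exact (key j i hle hij.symm).symm

/-- Cutting `σ ↓ Sym(m)` of a permutation `σ ∈ Sym(n)` for `m ≤ n`. -/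
noncomputable def cutPerm {n : ℕ} (σ : Equiv.Perm (Fin n)) {m : ℕ} (h : m ≤ n) :
    Equiv.Perm (Fin m) :=
  Equiv.ofBijective (cutFun σ h) (Finite.injective_iff_bijective.mp (cutFun_injective σ h))

/-- Lifting `τ ↑ Sym(n)` of a permutation `τ ∈ Sym(m)` for `m ≤ n`: it acts as `τ` on
`{0,…,m-1}` and fixes the remaining points. -/
noncomputable def liftPerm {m : ℕ} (τ : Equiv.Perm (Fin m)) {n : ℕ} (h : m ≤ n) :
    Equiv.Perm (Fin n) :=
  τ.viaFintypeEmbedding (Fin.castLEEmb h)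

/-- `σ ↕ Sym(n)`: lifting if `m ≤ n`, cutting if `n ≤ m`. -/
noncomputable def updown {m : ℕ} (σ : Equiv.Perm (Fin m)) (n : ℕ) : Equiv.Perm (Fin n) :=
  if h : m ≤ n then liftPerm σ h else cutPerm σ (le_of_not_ge h)

end CutLift

/-- An almost permutation of `ℕ`: a map with cofinite range which is injective on a
cofinite set. -/
def AlmostPerm (f : ℕ → ℕ) : Prop :=
  (Set.range f)ᶜ.Finite ∧ ∃ S : Set ℕ, Sᶜ.Finite ∧ Set.InjOn f S

/-- `limsup` of a real sequence along an infinite set of indices. -/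
noncomputable def limsupOn (S : Set ℕ) (x : ℕ → ℝ) : ℝ :=
  Filter.limsup x (Filter.atTop ⊓ Filter.principal S)

/-- Almost equality: the sets where two sets of naturals differ is finite. -/
instance finSetoid : Setoid (Set ℕ) where
  r S T := (symmDiff S T).Finite
  iseqv := by
    refine ⟨fun S => by simp [symmDiff_self], fun h => by rwa [symmDiff_comm], ?_⟩
    intro S T V h1 h2
    exact (h1.union h2).subset (symmDiff_triangle S T V)

/-- The Boolean algebra `P(ℕ)/Fin`. -/
def PFin : Type := Quotient finSetoid

/-- Class of a subset of `ℕ` in `P(ℕ)/Fin`. -/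
def PFin.mk (S : Set ℕ) : PFin := Quotient.mk finSetoid S

/-- Join in `P(ℕ)/Fin`. -/
def PFin.sup : PFin → PFin → PFin :=
  Quotient.map₂ (· ∪ ·) (by
    intro S S' h1 T T' h2
    refine Set.Finite.subset (h1.union h2) ?_
    intro x hx
    simp only [Set.mem_symmDiff, Set.mem_union] at *
    tauto)

/-- Complement in `P(ℕ)/Fin`. -/
def PFin.compl : PFin → PFin :=
  Quotient.map (·ᶜ) (by
    intro S T h
    show (symmDiff Sᶜ Tᶜ).Finite
    rwa [compl_symmDiff_compl])

/-- Todorčević's open coloring axiom `OCA`. -/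
def OCA : Prop :=
  ∀ (X : Type) [MetricSpace X] [TopologicalSpace.SeparableSpace X],
    ∀ K : Set (X × X), IsOpen K → (∀ x y : X, (x, y) ∈ K → (y, x) ∈ K) →
      (∃ Y : Set X, ¬ Y.Countable ∧ ∀ x ∈ Y, ∀ y ∈ Y, x ≠ y → (x, y) ∈ K) ∨
      (∃ c : ℕ → Set X, (⋃ n, c n) = Set.univ ∧
        ∀ n, ∀ x ∈ c n, ∀ y ∈ c n, x ≠ y → (x, y) ∉ K)

/-- Martin's axiom for σ-linked partial orders (for `ℵ₁` many dense sets). -/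
def MAσlinked : Prop :=
  ∀ (P : Type) [PartialOrder P],
    (∃ Ps : ℕ → Set P, (⋃ n, Ps n) = Set.univ ∧
      ∀ n, ∀ p ∈ Ps n, ∀ q ∈ Ps n, ∃ r : P, r ≤ p ∧ r ≤ q) →
    ∀ (ι : Type) (D : ι → Set P), Cardinal.mk ι ≤ Cardinal.aleph 1 →
      (∀ i, ∀ p : P, ∃ q ∈ D i, q ≤ p) →
      ∃ G : Set P,
        (∀ p ∈ G, ∀ q ∈ G, ∃ r ∈ G, r ≤ p ∧ r ≤ q) ∧
        (∀ p ∈ G, ∀ q : P, p ≤ q → q ∈ G) ∧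
        ∀ i, (G ∩ D i).Nonempty


lemma cutFun_eq_of_lt {n m : ℕ} (σ : Equiv.Perm (Fin n)) (h : m ≤ n) (i : Fin m)
    (hlt : ((σ (Fin.castLE h i) : Fin n) : ℕ) < m) :
    cutFun σ h i = ⟨((σ (Fin.castLE h i) : Fin n) : ℕ), hlt⟩ := by
  have hs : 1 ≤ (1:ℕ) ∧ (((σ ^ 1) (Fin.castLE h i) : Fin n) : ℕ) < m := by
    simpa using hlt
  have h1 : Nat.find (cut_exists σ h i) = 1 :=
    le_antisymm (Nat.find_le hs) (Nat.find_spec (cut_exists σ h i)).1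
  apply Fin.ext
  show (((σ ^ Nat.find (cut_exists σ h i)) (Fin.castLE h i) : Fin n) : ℕ) = _
  rw [h1, pow_one]

lemma cutPerm_apply {n m : ℕ} (σ : Equiv.Perm (Fin n)) (h : m ≤ n) (i : Fin m) :
    cutPerm σ h i = cutFun σ h i := rfl

lemma cut_good {n m : ℕ} (σ τ : Equiv.Perm (Fin n)) (hmn : m ≤ n) (i : Fin m)
    (h1 : ((τ (Fin.castLE hmn i) : Fin n) : ℕ) < m)
    (h2 : ((σ (Fin.castLE hmn (cutFun τ hmn i)) : Fin n) : ℕ) < m) :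
    cutPerm (σ * τ) hmn i = cutPerm σ hmn (cutPerm τ hmn i) := by
  have hj : cutFun τ hmn i = ⟨((τ (Fin.castLE hmn i) : Fin n) : ℕ), h1⟩ :=
    cutFun_eq_of_lt τ hmn i h1
  have hcast : Fin.castLE hmn (cutFun τ hmn i) = τ (Fin.castLE hmn i) := by
    apply Fin.ext
    rw [hj]
    rfl
  have h2' : ((σ (τ (Fin.castLE hmn i)) : Fin n) : ℕ) < m := by rwa [hcast] at h2
  have hmul : (((σ * τ) (Fin.castLE hmn i) : Fin n) : ℕ) < m := h2'
  rw [cutPerm_apply, cutPerm_apply, cutPerm_apply, cutFun_eq_of_lt (σ * τ) hmn i hmul,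
    cutFun_eq_of_lt σ hmn (cutFun τ hmn i) h2]
  apply Fin.ext
  show ((((σ * τ) (Fin.castLE hmn i)) : Fin n) : ℕ) = ((σ (Fin.castLE hmn (cutFun τ hmn i)) : Fin n) : ℕ)
  rw [hcast]
  rfl

/-- For `1 ≤ m ≤ n`, the cutting map `Sym(n) → Sym(m)` is a uniform
`2(n-m)/m`-homomorphism. -/
theorem cutPerm_uniform_quasimorphism (m n : ℕ) (hm : 1 ≤ m) (hmn : m ≤ n)
    (σ τ : Equiv.Perm (Fin n)) :
    hd (cutPerm (σ * τ) hmn) (cutPerm σ hmn * cutPerm τ hmn) ≤ 2 * ((n : ℝ) - m) / m := by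
  classical
  set A : Finset (Fin m) :=
    Finset.univ.filter fun i => m ≤ ((τ (Fin.castLE hmn i) : Fin n) : ℕ) with hA
  set B : Finset (Fin m) :=
    Finset.univ.filter fun i => m ≤ ((σ (Fin.castLE hmn (cutFun τ hmn i)) : Fin n) : ℕ) with hB
  set D : Finset (Fin m) :=
    Finset.univ.filter fun i =>
      cutPerm (σ * τ) hmn i ≠ (cutPerm σ hmn * cutPerm τ hmn) i with hD
  have hsub : D ⊆ A ∪ B := by
    intro i hi
    simp only [hD, Finset.mem_filter, Finset.mem_univ, true_and] at hi
    by_contra hcon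
    simp only [Finset.mem_union, hA, hB, Finset.mem_filter, Finset.mem_univ, true_and,
      not_or, not_le] at hcon
    exact hi (cut_good σ τ hmn i hcon.1 hcon.2)
  have hAcard : A.card ≤ n - m := by
    have := Finset.card_le_card_of_injOn
      (fun i : Fin m => ((τ (Fin.castLE hmn i) : Fin n) : ℕ))
      (s := A) (t := Finset.Ico m n)
      (fun i hi => by
        simp only [Finset.mem_coe, hA, Finset.mem_filter, Finset.mem_univ, true_and] at hi
        exact Finset.mem_Ico.mpr ⟨hi, (τ (Fin.castLE hmn i)).2⟩)
      (fun i _ j _ hij => by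
        have : Fin.castLE hmn i = Fin.castLE hmn j := τ.injective (Fin.ext hij)
        exact Fin.castLE_injective hmn this)
    simpa [Nat.card_Ico] using this
  have hBcard : B.card ≤ n - m := by
    have := Finset.card_le_card_of_injOn
      (fun i : Fin m => ((σ (Fin.castLE hmn (cutFun τ hmn i)) : Fin n) : ℕ))
      (s := B) (t := Finset.Ico m n)
      (fun i hi => by
        simp only [Finset.mem_coe, hB, Finset.mem_filter, Finset.mem_univ, true_and] at hi
        exact Finset.mem_Ico.mpr ⟨hi, (σ (Fin.castLE hmn (cutFun τ hmn i))).2⟩)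
      (fun i _ j _ hij => by
        have h1 : Fin.castLE hmn (cutFun τ hmn i) = Fin.castLE hmn (cutFun τ hmn j) :=
          σ.injective (Fin.ext hij)
        exact cutFun_injective τ hmn (Fin.castLE_injective hmn h1))
    simpa [Nat.card_Ico] using this
  have hDcard : D.card ≤ 2 * (n - m) := by
    calc D.card ≤ (A ∪ B).card := Finset.card_le_card hsub
      _ ≤ A.card + B.card := Finset.card_union_le _ _
      _ ≤ (n - m) + (n - m) := Nat.add_le_add hAcard hBcard
      _ = 2 * (n - m) := (two_mul _).symm
  have hm0 : (0:ℝ) < m := by exact_mod_cast hm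
  unfold hd
  rw [div_le_div_iff_of_pos_right hm0]
  have : ((2 * (n - m) : ℕ) : ℝ) = 2 * ((n : ℝ) - m) := by
    push_cast [Nat.cast_sub hmn]
    ring
  rw [← this]
  exact_mod_cast hDcard

end SymPaper
end

section
/- Let n ≥ 1 and m ≥ 1 be natural numbers, δ ∈ [0,1] a real number, and φ : Sym(n) → Sym(m) a map such that for every σ ∈ Sym(m) there exists τ ∈ Sym(n) with d_m(φ(τ), σ) ≤ δ. Then m! ≤ n! · (⌊δm⌋)! · C(m, ⌊δm⌋), and consequently m − ⌊δm⌋ ≤ n. -/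
open Filter Equiv Set

namespace SymPaper

open Finset

lemma aux_card_fix (m k : ℕ) (S : Finset (Fin m)) (hS : S.card = k) :
    ((Finset.univ : Finset (Equiv.Perm (Fin m))).filter (fun π => π.support ⊆ S)).card
      = k.factorial := by
  classical
  have h1 : ∀ π : Equiv.Perm (Fin m), π.support ⊆ S ↔ ∀ a, ¬ (a ∈ S) → π a = a := by
    intro π
    constructor
    · intro h a ha
      by_contra hne
      exact ha (h (Equiv.Perm.mem_support.mpr hne))
    · intro h a ha
      by_contra hna
      exact Equiv.Perm.mem_support.mp ha (h a hna)
  calc ((Finset.univ : Finset (Equiv.Perm (Fin m))).filter (fun π => π.support ⊆ S)).card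
      = Fintype.card {f : Equiv.Perm (Fin m) // ∀ a, ¬ (a ∈ S) → f a = a} := by
        rw [Fintype.card_subtype]
        apply Finset.card_bij (fun π _ => π) <;> simp [h1]
    _ = Fintype.card (Equiv.Perm {x // x ∈ S}) :=
        (Fintype.card_congr (Equiv.Perm.subtypeEquivSubtypePerm _)).symm
    _ = (Fintype.card {x // x ∈ S}).factorial := Fintype.card_perm
    _ = k.factorial := by rw [Fintype.card_coe, hS]

lemma aux_card_small_support (m k : ℕ) (hkm : k ≤ m) :
    ((Finset.univ : Finset (Equiv.Perm (Fin m))).filter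
      (fun π => π.support.card ≤ k)).card ≤ m.choose k * k.factorial := by
  classical
  have hsub : (Finset.univ : Finset (Equiv.Perm (Fin m))).filter (fun π => π.support.card ≤ k)
      ⊆ ((Finset.univ : Finset (Fin m)).powersetCard k).biUnion
        (fun S => Finset.univ.filter (fun π => π.support ⊆ S)) := by
    intro π hπ
    simp only [Finset.mem_filter, Finset.mem_univ, true_and] at hπ
    obtain ⟨S, hS1, _, hS3⟩ := Finset.exists_subsuperset_card_eq
      (Finset.subset_univ _) hπ
      (by rw [Finset.card_univ, Fintype.card_fin]; exact hkm)
    refine Finset.mem_biUnion.mpr ⟨S, ?_, ?_⟩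
    · exact Finset.mem_powersetCard.mpr ⟨Finset.subset_univ _, hS3⟩
    · simp [hS1]
  calc ((Finset.univ : Finset (Equiv.Perm (Fin m))).filter
        (fun π => π.support.card ≤ k)).card
      ≤ _ := Finset.card_le_card hsub
    _ ≤ ∑ S ∈ (Finset.univ : Finset (Fin m)).powersetCard k,
          (Finset.univ.filter (fun π : Equiv.Perm (Fin m) => π.support ⊆ S)).card :=
        Finset.card_biUnion_le
    _ = ∑ S ∈ (Finset.univ : Finset (Fin m)).powersetCard k, k.factorial := by
        refine Finset.sum_congr rfl fun S hS => ?_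
        exact aux_card_fix m k S (Finset.mem_powersetCard.mp hS).2
    _ = m.choose k * k.factorial := by
        rw [Finset.sum_const, Finset.card_powersetCard, Finset.card_univ,
          Fintype.card_fin, smul_eq_mul]


/-- if `φ : Sym(n) → Sym(m)` is `δ`-almost surjective then
`m! ≤ n!·⌊δm⌋!·C(m,⌊δm⌋)`, and consequently `m - ⌊δm⌋ ≤ n`. -/
theorem almost_surjective_factorial_bound (n m : ℕ) (hn : 1 ≤ n) (hm : 1 ≤ m)
    (δ : ℝ) (h0 : 0 ≤ δ) (h1 : δ ≤ 1)
    (φ : Equiv.Perm (Fin n) → Equiv.Perm (Fin m))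
    (hsurj : ∀ σ : Equiv.Perm (Fin m), ∃ τ, hd (φ τ) σ ≤ δ) :
    m.factorial ≤ n.factorial * (Nat.floor (δ * m)).factorial * m.choose (Nat.floor (δ * m)) ∧
      m - Nat.floor (δ * m) ≤ n := by
  classical
  set k := Nat.floor (δ * m) with hk
  have hkm : k ≤ m := by
    have : δ * m ≤ (m : ℝ) := by nlinarith
    calc k ≤ Nat.floor ((m : ℝ)) := Nat.floor_le_floor this
      _ = m := Nat.floor_natCast m
  -- covering
  have hcover : (Finset.univ : Finset (Equiv.Perm (Fin m)))
      ⊆ (Finset.univ : Finset (Equiv.Perm (Fin n))).biUnion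
        (fun τ => Finset.univ.filter (fun σ => ((φ τ)⁻¹ * σ).support.card ≤ k)) := by
    intro σ _
    obtain ⟨τ, hτ⟩ := hsurj σ
    refine Finset.mem_biUnion.mpr ⟨τ, Finset.mem_univ τ, ?_⟩
    simp only [Finset.mem_filter, Finset.mem_univ, true_and]
    rw [← hd_filter_eq_support]
    have hmpos : (0 : ℝ) < m := by exact_mod_cast hm
    have : ((Finset.univ.filter fun i => (φ τ) i ≠ σ i).card : ℝ) ≤ δ * m := by
      have := hτ
      unfold hd at this
      rw [div_le_iff₀ hmpos] at this
      exact this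
    exact Nat.le_floor this
  have hballs : ∀ τ : Equiv.Perm (Fin n),
      (Finset.univ.filter (fun σ : Equiv.Perm (Fin m) =>
        ((φ τ)⁻¹ * σ).support.card ≤ k)).card ≤ m.choose k * k.factorial := by
    intro τ
    refine le_trans (Finset.card_le_card_of_injOn (fun σ => (φ τ)⁻¹ * σ) ?_ ?_)
      (aux_card_small_support m k hkm)
    · intro σ hσ
      simp only [Finset.mem_coe, Finset.mem_filter, Finset.mem_univ, true_and] at hσ ⊢
      exact hσ
    · intro a _ b _ hab
      exact mul_left_cancel hab
  have hmain : m.factorial ≤ n.factorial * (m.choose k * k.factorial) := by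
    calc m.factorial = (Finset.univ : Finset (Equiv.Perm (Fin m))).card := by
          rw [Finset.card_univ, Fintype.card_perm, Fintype.card_fin]
      _ ≤ _ := Finset.card_le_card hcover
      _ ≤ ∑ τ : Equiv.Perm (Fin n),
            (Finset.univ.filter (fun σ : Equiv.Perm (Fin m) =>
              ((φ τ)⁻¹ * σ).support.card ≤ k)).card := Finset.card_biUnion_le
      _ ≤ ∑ _τ : Equiv.Perm (Fin n), m.choose k * k.factorial :=
          Finset.sum_le_sum fun τ _ => hballs τ
      _ = n.factorial * (m.choose k * k.factorial) := by
          rw [Finset.sum_const, Finset.card_univ, Fintype.card_perm, Fintype.card_fin,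
            smul_eq_mul]
  constructor
  · calc m.factorial ≤ n.factorial * (m.choose k * k.factorial) := hmain
      _ = n.factorial * k.factorial * m.choose k := by ring
  · have hfact : (m - k).factorial ≤ n.factorial := by
      have hid : m.choose k * k.factorial * (m - k).factorial = m.factorial :=
        Nat.choose_mul_factorial_mul_factorial hkm
      have hpos : 0 < m.choose k * k.factorial :=
        Nat.mul_pos (Nat.choose_pos hkm) (Nat.factorial_pos k)
      have : (m - k).factorial * (m.choose k * k.factorial)
          ≤ n.factorial * (m.choose k * k.factorial) := by
        calc (m - k).factorial * (m.choose k * k.factorial)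
            = m.factorial := by rw [← hid]; ring
          _ ≤ n.factorial * (m.choose k * k.factorial) := hmain
      exact Nat.le_of_mul_le_mul_right this hpos
    by_contra hcon
    push_neg at hcon
    have : n.factorial < (m - k).factorial :=
      (Nat.factorial_lt hn).mpr hcon
    omega

end SymPaper
end

section
/- Let (k_n)_n and (l_n)_n be sequences of natural numbers with lim_n k_n = lim_n l_n = ∞, and let φ : Sym[(k_n)_n] → Sym[(l_n)_n] be a group isomorphism. Then there exists an automorphism θ of the Boolean algebra P(ℕ)/Fin (which sends classes of infinite sets to classes of infinite sets) such that for all (a_n)_n, (b_n)_n ∈ ∏_n Sym(k_n), all (a'_n)_n, (b'_n)_n ∈ ∏_n Sym(l_n) with φ([(a_n)_n]) = [(a'_n)_n] and φ([(b_n)_n]) = [(b'_n)_n], every infinite S ⊆ ℕ, and every T ⊆ ℕ whose class equals θ([S]): limsup_{n ∈ S} d_{k_n}(a_n, b_n) = 0 if and only if limsup_{n ∈ T} d_{l_n}(a'_n, b'_n) = 0. -/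
open Filter Equiv Set

namespace SymPaper

open Filter Equiv Set

namespace SymPaper

section HD
variable {N : ℕ}

lemma hd_le_one (σ τ : Equiv.Perm (Fin N)) : hd σ τ ≤ 1 := by
  rcases Nat.eq_zero_or_pos N with h0 | hpos
  · unfold hd; subst h0; simp
  · have hN : (0 : ℝ) < N := by exact_mod_cast hpos
    unfold hd
    rw [div_le_one hN]
    have := Finset.card_le_card (Finset.filter_subset (fun i => σ i ≠ τ i) Finset.univ)
    simpa using (by exact_mod_cast this : ((Finset.univ.filter fun i => σ i ≠ τ i).card : ℝ) ≤ (Finset.univ : Finset (Fin N)).card)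

lemma hd_left_inv (σ τ : Equiv.Perm (Fin N)) : hd σ τ = hd (σ⁻¹ * τ) 1 := by
  unfold hd
  rw [hd_filter_eq_support σ τ, hd_filter_eq_support (σ⁻¹ * τ) 1, mul_one,
    Equiv.Perm.support_inv]

lemma hd_symm (σ τ : Equiv.Perm (Fin N)) : hd σ τ = hd τ σ := by
  rw [hd_left_inv σ τ, hd_left_inv τ σ]
  have : (σ⁻¹ * τ)⁻¹ = τ⁻¹ * σ := by group
  rw [← this, hd_inv_one]

lemma hd_triangle (σ ρ τ : Equiv.Perm (Fin N)) : hd σ τ ≤ hd σ ρ + hd ρ τ := by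
  rw [hd_left_inv σ τ, hd_left_inv σ ρ, hd_left_inv ρ τ]
  have h : σ⁻¹ * τ = (σ⁻¹ * ρ) * (ρ⁻¹ * τ) := by group
  rw [h]
  exact hd_mul_one_le _ _

lemma hd_comm_le_right (p q : Equiv.Perm (Fin N)) :
    hd (p * q * p⁻¹ * q⁻¹) 1 ≤ 2 * hd q 1 := by
  have h : p * q * p⁻¹ * q⁻¹ = (p * q * p⁻¹) * q⁻¹ := by group
  calc hd (p * q * p⁻¹ * q⁻¹) 1 ≤ hd (p * q * p⁻¹) 1 + hd q⁻¹ 1 := by rw [h]; exact hd_mul_one_le _ _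
    _ = hd q 1 + hd q 1 := by rw [hd_conj_one, hd_inv_one]
    _ = 2 * hd q 1 := by ring

lemma hd_comm_le_left (p q : Equiv.Perm (Fin N)) :
    hd (p * q * p⁻¹ * q⁻¹) 1 ≤ 2 * hd p 1 := by
  have h : p * q * p⁻¹ * q⁻¹ = p * (q * p⁻¹ * q⁻¹) := by group
  calc hd (p * q * p⁻¹ * q⁻¹) 1 ≤ hd p 1 + hd (q * p⁻¹ * q⁻¹) 1 := by rw [h]; exact hd_mul_one_le _ _
    _ = hd p 1 + hd p 1 := by rw [hd_conj_one, hd_inv_one]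
    _ = 2 * hd p 1 := by ring

lemma hd_finRotate (h2 : 2 ≤ N) : hd (finRotate N) 1 = 1 := by
  have hN : (0 : ℝ) < N := by exact_mod_cast (by omega : 0 < N)
  rw [hd_one, _root_.support_finRotate_of_le h2]
  simp [Finset.card_univ, div_self (ne_of_gt hN)]

lemma hd_mul_cancel (h q : Equiv.Perm (Fin N)) : hd (h * q) q = hd h 1 := by
  rw [hd_left_inv]
  have : (h * q)⁻¹ * q = q⁻¹ * h⁻¹ * q := by group
  rw [this]
  have : q⁻¹ * h⁻¹ * q = q⁻¹ * h⁻¹ * (q⁻¹)⁻¹ := by group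
  rw [this, hd_conj_one, hd_inv_one]

end HD
end SymPaper

namespace SymPaper
section Filters

/-- The filter of "large subsets of S". -/
noncomputable def FS (S : Set ℕ) : Filter ℕ := Filter.atTop ⊓ Filter.principal S

lemma FS_le_atTop (S : Set ℕ) : FS S ≤ Filter.atTop := inf_le_left

lemma FS_neBot {S : Set ℕ} (hS : S.Infinite) : (FS S).NeBot := by
  rw [FS, Filter.inf_principal_neBot_iff]
  intro U hU
  rcases Filter.mem_atTop_sets.mp hU with ⟨N, hN⟩
  rcases hS.exists_gt N with ⟨n, hnS, hn⟩
  exact ⟨n, hN n (le_of_lt hn), hnS⟩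

lemma tendsto_zero_iff {f : ℕ → ℝ} (hf : ∀ n, 0 ≤ f n) (l : Filter ℕ) :
    Filter.Tendsto f l (nhds 0) ↔ ∀ ε : ℝ, 0 < ε → ∀ᶠ n in l, f n < ε := by
  rw [Metric.tendsto_nhds]
  constructor
  · intro h ε hε
    filter_upwards [h ε hε] with n hn
    rw [Real.dist_eq, sub_zero, abs_of_nonneg (hf n)] at hn
    exact hn
  · intro h ε hε
    filter_upwards [h ε hε] with n hn
    rw [Real.dist_eq, sub_zero, abs_of_nonneg (hf n)]
    exact hn

lemma tendsto_FS_iff {f : ℕ → ℝ} (hf : ∀ n, 0 ≤ f n) (S : Set ℕ) :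
    Filter.Tendsto f (FS S) (nhds 0) ↔
      ∀ ε : ℝ, 0 < ε → ∀ᶠ n in Filter.atTop, n ∈ S → f n < ε := by
  rw [tendsto_zero_iff hf]
  constructor
  · intro h ε hε
    exact Filter.eventually_inf_principal.mp (h ε hε)
  · intro h ε hε
    exact Filter.eventually_inf_principal.mpr (h ε hε)

lemma FS_congr {S T : Set ℕ} (h : (symmDiff S T).Finite) : FS S = FS T := by
  have hev : ∀ᶠ n in Filter.atTop, ¬ n ∈ symmDiff S T := by
    rw [← Nat.cofinite_eq_atTop]
    exact Set.Finite.eventually_cofinite_notMem h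
  unfold FS
  ext U
  rw [Filter.mem_inf_principal, Filter.mem_inf_principal]
  constructor
  · intro h1
    filter_upwards [h1, hev] with n hn hd hT
    apply hn
    by_contra hS
    exact hd (Or.inr ⟨hT, hS⟩)
  · intro h1
    filter_upwards [h1, hev] with n hn hd hS
    apply hn
    by_contra hT
    exact hd (Or.inl ⟨hS, hT⟩)

lemma tendsto_FS_union {f : ℕ → ℝ} (hf : ∀ n, 0 ≤ f n) (S T : Set ℕ) :
    Filter.Tendsto f (FS (S ∪ T)) (nhds 0) ↔
      Filter.Tendsto f (FS S) (nhds 0) ∧ Filter.Tendsto f (FS T) (nhds 0) := by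
  rw [tendsto_FS_iff hf, tendsto_FS_iff hf, tendsto_FS_iff hf]
  constructor
  · intro h
    refine ⟨fun ε hε => ?_, fun ε hε => ?_⟩ <;>
      · filter_upwards [h ε hε] with n hn hm
        exact hn (by simp [hm])
  · intro ⟨h1, h2⟩ ε hε
    filter_upwards [h1 ε hε, h2 ε hε] with n hn1 hn2 hm
    rcases hm with hm | hm
    · exact hn1 hm
    · exact hn2 hm

lemma FS_univ : FS Set.univ = Filter.atTop := by
  unfold FS; simp

lemma tendsto_FS_compl_union {f : ℕ → ℝ} (hf : ∀ n, 0 ≤ f n) (S : Set ℕ)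
    (h1 : Filter.Tendsto f (FS S) (nhds 0)) (h2 : Filter.Tendsto f (FS Sᶜ) (nhds 0)) :
    Filter.Tendsto f Filter.atTop (nhds 0) := by
  have := (tendsto_FS_union hf S Sᶜ).mpr ⟨h1, h2⟩
  rwa [Set.union_compl_self, FS_univ] at this

lemma infinite_of_not_tendsto_FS {f : ℕ → ℝ} (hf : ∀ n, 0 ≤ f n) {S : Set ℕ}
    (h : ¬ Filter.Tendsto f (FS S) (nhds 0)) :
    ∃ ε : ℝ, 0 < ε ∧ {n | n ∈ S ∧ ε ≤ f n}.Infinite := by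
  rw [tendsto_FS_iff hf] at h
  push_neg at h
  obtain ⟨ε, hε, h⟩ := h
  refine ⟨ε, hε, ?_⟩
  rw [← Nat.frequently_atTop_iff_infinite]
  exact h

lemma ultra_not_tendsto {f : ℕ → ℝ} (hf : ∀ n, 0 ≤ f n) (U : Ultrafilter ℕ)
    (h : ¬ Filter.Tendsto f (U : Filter ℕ) (nhds 0)) :
    ∃ ε : ℝ, 0 < ε ∧ {n | ε ≤ f n} ∈ U := by
  rw [tendsto_zero_iff hf] at h
  push_neg at h
  obtain ⟨ε, hε, h⟩ := h
  refine ⟨ε, hε, ?_⟩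
  exact h

lemma ultra_disjoint {A B : Set ℕ} (U : Ultrafilter ℕ) (hA : A ∈ U) (hB : B ∈ U)
    (h : A ∩ B = ∅) : False := by
  have := Filter.inter_mem hA hB
  rw [h] at this
  exact Filter.empty_notMem (U : Filter ℕ) this

end Filters
end SymPaper

namespace SymPaper
section NullCalc
open scoped Classical
variable {k : ℕ → ℕ}

lemma symNull_mono {F F' : Filter ℕ} (h : F ≤ F') : symNull k F' ≤ symNull k F := by
  intro a ha
  exact Filter.Tendsto.mono_left ha h

lemma mem_symNull {F : Filter ℕ} {a : ∀ n, Equiv.Perm (Fin (k n))} :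
    a ∈ symNull k F ↔ Filter.Tendsto (fun n => hd (a n) 1) F (nhds 0) := Iff.rfl

lemma mkRP_eq_iff {a b : ∀ n, Equiv.Perm (Fin (k n))} :
    mkRP a = mkRP b ↔ a⁻¹ * b ∈ symNull k Filter.atTop := QuotientGroup.eq

lemma null_congr {S : Set ℕ} {a b : ∀ n, Equiv.Perm (Fin (k n))} (h : mkRP a = mkRP b) :
    a ∈ symNull k (FS S) ↔ b ∈ symNull k (FS S) := by
  have hn : a⁻¹ * b ∈ symNull k (FS S) :=
    symNull_mono (FS_le_atTop S) (mkRP_eq_iff.mp h)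
  constructor
  · intro ha
    have := (symNull k (FS S)).mul_mem ha hn
    simpa using this
  · intro hb
    have := (symNull k (FS S)).mul_mem hb ((symNull k (FS S)).inv_mem hn)
    have h2 : b * (a⁻¹ * b)⁻¹ = b * b⁻¹ * a := by group
    rw [h2] at this
    simpa using this

/-- The limsup bridge. -/
lemma limsupOn_eq_zero_iff {S : Set ℕ} (hS : S.Infinite) (a b : ∀ n, Equiv.Perm (Fin (k n))) :
    limsupOn S (fun n => hd (a n) (b n)) = 0 ↔ a⁻¹ * b ∈ symNull k (FS S) := by
  have hfs : (FS S).NeBot := FS_neBot hS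
  have hpt : ∀ n, hd (a n) (b n) = hd ((a⁻¹ * b) n) 1 := fun n => hd_left_inv (a n) (b n)
  have h0 : ∀ n, 0 ≤ hd (a n) (b n) := fun n => hd_nonneg _ _
  have h1 : ∀ n, hd (a n) (b n) ≤ 1 := fun n => hd_le_one _ _
  have hbdd : Filter.IsBoundedUnder (· ≤ ·) (FS S) (fun n => hd (a n) (b n)) :=
    Filter.isBoundedUnder_of ⟨1, h1⟩
  have hbdd' : Filter.IsBoundedUnder (· ≥ ·) (FS S) (fun n => hd (a n) (b n)) :=
    Filter.isBoundedUnder_of ⟨0, h0⟩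
  constructor
  · intro h
    have h' : Filter.limsup (fun n => hd (a n) (b n)) (FS S) = 0 := h
    rw [mem_symNull]
    have hlim : Filter.liminf (fun n => hd (a n) (b n)) (FS S) = 0 := by
      apply le_antisymm
      · exact le_of_le_of_eq (Filter.liminf_le_limsup hbdd hbdd') h'
      · exact Filter.le_liminf_of_le hbdd.isCoboundedUnder_ge (Filter.Eventually.of_forall h0)
    have htend := tendsto_of_liminf_eq_limsup hlim h' hbdd hbdd'
    exact (Filter.tendsto_congr hpt).mp htend
  · intro h
    have htend : Filter.Tendsto (fun n => hd (a n) (b n)) (FS S) (nhds 0) :=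
      (Filter.tendsto_congr hpt).mpr h
    exact htend.limsup_eq

/-- Splitting a sequence along a set. -/
noncomputable def restr (S : Set ℕ) (a : ∀ n, Equiv.Perm (Fin (k n))) :
    ∀ n, Equiv.Perm (Fin (k n)) :=
  fun n => if n ∈ S then a n else 1

lemma restr_mul_restr_compl (S : Set ℕ) (a : ∀ n, Equiv.Perm (Fin (k n))) :
    restr S a * restr Sᶜ a = a := by
  funext n
  by_cases h : n ∈ S
  · have h' : ¬ n ∈ Sᶜ := by simpa using h
    simp [restr, if_pos h, if_neg h', Pi.mul_apply]
  · have h' : n ∈ Sᶜ := by simpa using h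
    simp [restr, if_neg h, if_pos h', Pi.mul_apply]

lemma restr_mem_null_compl (S : Set ℕ) (a : ∀ n, Equiv.Perm (Fin (k n))) :
    restr S a ∈ symNull k (FS Sᶜ) := by
  rw [mem_symNull, tendsto_FS_iff (fun n => hd_nonneg _ _)]
  intro ε hε
  apply Filter.Eventually.of_forall
  intro n hn
  have hns : ¬ n ∈ S := by simpa using hn
  have : restr S a n = 1 := by simp [restr, if_neg hns]
  rw [this, hd_self]
  exact hε

/-- Elements null on complementary sets commute modulo the null subgroup. -/
lemma commute_of_complementary {S : Set ℕ} {p q : ∀ n, Equiv.Perm (Fin (k n))}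
    (hp : p ∈ symNull k (FS S)) (hq : q ∈ symNull k (FS Sᶜ)) :
    mkRP p * mkRP q = mkRP q * mkRP p := by
  have key : p * q * p⁻¹ * q⁻¹ ∈ symNull k Filter.atTop := by
    rw [mem_symNull]
    apply tendsto_FS_compl_union (fun n => hd_nonneg _ _) S
    · have h2 : Filter.Tendsto (fun n => 2 * hd (p n) 1) (FS S) (nhds 0) := by
        have := hp.const_mul (2:ℝ)
        simpa using this
      apply squeeze_zero (fun n => hd_nonneg _ _) _ h2
      intro n
      exact hd_comm_le_left (p n) (q n)
    · have h2 : Filter.Tendsto (fun n => 2 * hd (q n) 1) (FS Sᶜ) (nhds 0) := by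
        have := hq.const_mul (2:ℝ)
        simpa using this
      apply squeeze_zero (fun n => hd_nonneg _ _) _ h2
      intro n
      exact hd_comm_le_right (p n) (q n)
  have heq : mkRP (p * q * p⁻¹ * q⁻¹) = mkRP (1 : ∀ n, Equiv.Perm (Fin (k n))) := by
    rw [mkRP_eq_iff]
    have : (p * q * p⁻¹ * q⁻¹)⁻¹ * 1 = (p * q * p⁻¹ * q⁻¹)⁻¹ := by group
    rw [this]
    exact (symNull k Filter.atTop).inv_mem key
  have h1 : mkRP (p * q * p⁻¹ * q⁻¹) = mkRP p * mkRP q * (mkRP p)⁻¹ * (mkRP q)⁻¹ := rfl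
  have h2 : mkRP (1 : ∀ n, Equiv.Perm (Fin (k n))) = 1 := rfl
  rw [h1, h2] at heq
  calc mkRP p * mkRP q
      = (mkRP p * mkRP q * (mkRP p)⁻¹ * (mkRP q)⁻¹) * (mkRP q * mkRP p) := by group
    _ = 1 * (mkRP q * mkRP p) := by rw [heq]
    _ = mkRP q * mkRP p := one_mul _

/-- Witness: a sequence of full rotations supported on `D`. -/
noncomputable def rotOn (k : ℕ → ℕ) (D : Set ℕ) : ∀ n, Equiv.Perm (Fin (k n)) :=
  fun n => if n ∈ D then finRotate (k n) else 1

lemma rotOn_null {D T : Set ℕ} (h : D ∩ T = ∅) : rotOn k D ∈ symNull k (FS T) := by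
  rw [mem_symNull, tendsto_FS_iff (fun n => hd_nonneg _ _)]
  intro ε hε
  apply Filter.Eventually.of_forall
  intro n hn
  have hnD : ¬ n ∈ D := fun hD => by
    have : n ∈ D ∩ T := ⟨hD, hn⟩
    rw [h] at this
    exact this
  simp only [rotOn, if_neg hnD]
  rw [hd_self]
  exact hε

lemma rotOn_not_null (hk : Filter.Tendsto k Filter.atTop Filter.atTop)
    {D T : Set ℕ} (hD : D.Infinite) (hDT : D ⊆ T) : ¬ rotOn k D ∈ symNull k (FS T) := by
  intro h
  rw [mem_symNull, tendsto_FS_iff (fun n => hd_nonneg _ _)] at h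
  have h2 := h (1/2) (by norm_num)
  have h3 : ∀ᶠ n in Filter.atTop, 2 ≤ k n := hk.eventually_ge_atTop 2
  obtain ⟨N, hN⟩ := Filter.eventually_atTop.mp (h2.and h3)
  obtain ⟨n, hnD, hn⟩ := hD.exists_gt N
  have h4 := hN n (le_of_lt hn)
  have h5 : hd (rotOn k D n) 1 = 1 := by
    simp only [rotOn, if_pos hnD]
    exact hd_finRotate h4.2
  have := h4.1 (hDT hnD)
  rw [h5] at this
  norm_num at this

/-- If two null subgroups agree, the sets agree mod finite. -/
lemma set_eq_of_null_eq (hk : Filter.Tendsto k Filter.atTop Filter.atTop) {T T' : Set ℕ}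
    (h : ∀ a : ∀ n, Equiv.Perm (Fin (k n)), a ∈ symNull k (FS T) ↔ a ∈ symNull k (FS T')) :
    (symmDiff T T').Finite := by
  rw [Set.symmDiff_def]
  apply Set.Finite.union
  · by_contra hinf
    have hne : (T \ T').Infinite := fun hfin => hinf hfin  -- Set.not_infinite
    have h1 : rotOn k (T \ T') ∈ symNull k (FS T') :=
      rotOn_null (Set.diff_inter_self)
    have h2 := (h _).mpr h1
    exact rotOn_not_null hk hne Set.diff_subset h2
  · by_contra hinf
    have hne : (T' \ T).Infinite := fun hfin => hinf hfin
    have h1 : rotOn k (T' \ T) ∈ symNull k (FS T) :=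
      rotOn_null (Set.diff_inter_self)
    have h2 := (h _).mp h1
    exact rotOn_not_null hk hne Set.diff_subset h2

lemma null_top_absurd (hk : Filter.Tendsto k Filter.atTop Filter.atTop) {S : Set ℕ}
    (hS : S.Infinite) :
    ∃ a : ∀ n, Equiv.Perm (Fin (k n)), ¬ a ∈ symNull k (FS S) :=
  ⟨rotOn k S, rotOn_not_null hk hS (le_refl S)⟩

end NullCalc
end SymPaper

namespace SymPaper
section LemmaF
open Equiv

/-- Scatter lemma: inside any finite set of non-fixed points of `σ` there is a subset `A`,
of proportional size, with `σ(A) ∩ A = ∅`. -/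
lemma scatter {m : ℕ} (σ : Equiv.Perm (Fin m)) (M : Finset (Fin m)) (hM : ∀ a ∈ M, σ a ≠ a) :
    ∃ A : Finset (Fin m), A ⊆ M ∧ (∀ a ∈ A, ∀ b ∈ A, σ a ≠ b) ∧ M.card ≤ 3 * A.card := by
  induction M using Finset.strongInduction with
  | _ M ih =>
    rcases M.eq_empty_or_nonempty with rfl | ⟨a, ha⟩
    · exact ⟨∅, by simp, by simp, by simp⟩
    · set R : Finset (Fin m) := {a, σ a, σ⁻¹ a} with hR
      have hMa : a ∉ M \ R := by simp [hR]
      have hM' : M \ R ⊂ M :=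
        (Finset.ssubset_iff_of_subset (Finset.sdiff_subset)).mpr ⟨a, ha, hMa⟩
      obtain ⟨A', hA'M, hA'free, hA'card⟩ :=
        ih (M \ R) hM' (fun b hb => hM b (Finset.sdiff_subset hb))
      have haA' : a ∉ A' := fun h => hMa (hA'M h)
      refine ⟨insert a A', ?_, ?_, ?_⟩
      · intro u hu
        rcases Finset.mem_insert.mp hu with rfl | hu
        · exact ha
        · exact Finset.sdiff_subset (hA'M hu)
      · intro u hu v hv
        rcases Finset.mem_insert.mp hu with hua | hu'
        · rcases Finset.mem_insert.mp hv with hva | hv'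
          · rw [hua, hva]
            exact hM a ha
          · rw [hua]
            intro hcon
            have := hA'M hv'
            rw [← hcon] at this
            simp [hR] at this
        · rcases Finset.mem_insert.mp hv with hva | hv'
          · rw [hva]
            intro hcon
            have h2 : u = σ⁻¹ a := by rw [← hcon]; simp
            have := hA'M hu'
            rw [h2] at this
            simp [hR] at this
          · exact hA'free u hu' v hv' 
      · have h1 : M.card ≤ (M \ R).card + R.card := Finset.card_le_card_sdiff_add_card
        have h2 : R.card ≤ 3 := by
          apply le_trans (Finset.card_insert_le _ _)
          apply Nat.succ_le_succ
          apply le_trans (Finset.card_insert_le _ _)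
          simp
        have h3 : (insert a A').card = A'.card + 1 := Finset.card_insert_of_notMem haA'
        omega

/-- Any injection defined on a finite subset extends to a permutation. -/
lemma extend_perm {m : ℕ} (D : Finset (Fin m)) (f : Fin m → Fin m)
    (hf : Set.InjOn f (D : Set (Fin m))) :
    ∃ g : Equiv.Perm (Fin m), ∀ p ∈ D, g p = f p := by
  classical
  set Ds : Set (Fin m) := (D : Set (Fin m)) with hDs
  set Ts : Set (Fin m) := f '' Ds with hTs
  have hbij : Set.BijOn f Ds Ts := hf.bijOn_image
  set e₁ : Ds ≃ Ts := hbij.equiv f with he₁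
  have hcardeq : Fintype.card Ts = Fintype.card Ds := Fintype.card_congr e₁.symm
  have hcompl : Fintype.card (↥Tsᶜ) = Fintype.card (↥Dsᶜ) := by
    rw [Fintype.card_compl_set, Fintype.card_compl_set, hcardeq]
  set e₂ : ↥Dsᶜ ≃ ↥Tsᶜ := Fintype.equivOfCardEq hcompl.symm with he₂
  refine ⟨(Equiv.Set.sumCompl Ds).symm.trans ((e₁.sumCongr e₂).trans (Equiv.Set.sumCompl Ts)), ?_⟩
  intro p hp
  have hpD : p ∈ Ds := hp
  simp only [Equiv.trans_apply]
  have h0 : (Equiv.Set.sumCompl Ds).symm p = Sum.inl ⟨p, hpD⟩ := by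
    simpa using Equiv.Set.sumCompl_symm_apply (s := Ds) (x := ⟨p, hpD⟩)
  rw [h0]
  have : (e₁.sumCongr e₂) (Sum.inl ⟨p, hpD⟩) = Sum.inl (e₁ ⟨p, hpD⟩) := rfl
  rw [this]
  have h2 : (Equiv.Set.sumCompl Ts) (Sum.inl (e₁ ⟨p, hpD⟩)) = ↑(e₁ ⟨p, hpD⟩) :=
    Equiv.Set.sumCompl_apply_inl Ts _
  rw [h2, he₁]
  rfl

/-- Enumeration of `t` elements of a finset of card ≥ t. -/
lemma enum_finset {m t : ℕ} (A : Finset (Fin m)) (h : t ≤ A.card) :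
    ∃ a : Fin t → Fin m, Function.Injective a ∧ ∀ i, a i ∈ A := by
  refine ⟨fun i => (A.orderIsoOfFin rfl (Fin.castLE h i) : Fin m), ?_, ?_⟩
  · intro i j hij
    have := (A.orderIsoOfFin rfl).injective (Subtype.coe_injective hij)
    exact Fin.castLE_injective h this
  · intro i
    exact (A.orderIsoOfFin rfl (Fin.castLE h i)).2

/-- Count of non-commuting points bounds the Hamming distance of the commutator from 1. -/
lemma supp_comm_ge {m t : ℕ} (x' y : Equiv.Perm (Fin m)) (b : Fin t → Fin m)
    (hbinj : Function.Injective b)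
    (hne : ∀ i, x' (y (b i)) ≠ y (x' (b i))) :
    (t : ℝ) / m ≤ hd (x' * y * x'⁻¹ * y⁻¹) 1 := by
  rcases Nat.eq_zero_or_pos m with h0 | hpos
  · subst h0
    have ht : t = 0 := by
      by_contra h
      exact (b ⟨0, Nat.pos_of_ne_zero h⟩).elim0
    subst ht
    simpa using hd_nonneg (x' * y * x'⁻¹ * y⁻¹) 1
  · have hmR : (0:ℝ) < m := by exact_mod_cast hpos
    set z := x' * y * x'⁻¹ * y⁻¹ with hz
    have hmem : ∀ i, y (x' (b i)) ∈ z.support := by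
      intro i
      rw [Equiv.Perm.mem_support, hz]
      have : (x' * y * x'⁻¹ * y⁻¹) (y (x' (b i))) = x' (y (b i)) := by
        simp [Equiv.Perm.mul_apply]
      rw [this]
      exact hne i
    have hinj : Function.Injective (fun i => y (x' (b i))) :=
      y.injective.comp (x'.injective.comp hbinj)
    have hcard : t ≤ z.support.card := by
      have := Finset.card_le_card_of_injOn (s := (Finset.univ : Finset (Fin t)))
        (t := z.support) (fun i => y (x' (b i))) (fun i _ => hmem i) (hinj.injOn)
      simpa using this
    rw [hd_one]
    gcongr

end LemmaF
end SymPaper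

namespace SymPaper
section LemmaFMain
open Equiv

set_option maxHeartbeats 2000000 in
lemma lemmaF {m : ℕ} (x y : Equiv.Perm (Fin m)) {δ : ℝ} (hδ1 : δ ≤ 1)
    (hx : δ ≤ hd x 1) (hy : δ ≤ hd y 1) :
    ∃ g : Equiv.Perm (Fin m),
      δ/6 - 5/m ≤ hd (g*x*g⁻¹ * y * (g*x*g⁻¹)⁻¹ * y⁻¹) 1 := by
  classical
  by_cases htriv : δ/6 - 5/(m:ℝ) ≤ 0
  · exact ⟨1, le_trans htriv (hd_nonneg _ _)⟩
  push_neg at htriv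
  have hm : 0 < m := by
    rcases Nat.eq_zero_or_pos m with h0 | h
    · exfalso
      subst h0
      have hx0 : hd x 1 = 0 := by unfold hd; simp
      rw [hx0] at hx
      norm_num at htriv
      linarith
    · exact h
  have hmR : (0:ℝ) < m := by exact_mod_cast hm
  have hδ0 : 0 < δ := by
    have h5 : 0 ≤ 5/(m:ℝ) := by positivity
    linarith
  -- support bounds
  rw [hd_one] at hx hy
  have hsx : δ * m ≤ (x.support.card : ℝ) := (le_div_iff₀ hmR).mp hx
  have hsy : δ * m ≤ (y.support.card : ℝ) := (le_div_iff₀ hmR).mp hy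
  -- scatter sets
  obtain ⟨A, hAsub, hAfree, hAcard⟩ :=
    scatter x x.support (fun a ha => Equiv.Perm.mem_support.mp ha)
  obtain ⟨B, hBsub, hBfree, hBcard⟩ :=
    scatter y y.support (fun a ha => Equiv.Perm.mem_support.mp ha)
  set t : ℕ := min (min (A.card / 2) B.card) (m / 5) with hts
  have h2t : 2 * t ≤ A.card := by
    have h1 : t ≤ A.card / 2 := le_trans (min_le_left _ _) (min_le_left _ _)
    omega
  have htB : t ≤ B.card := le_trans (min_le_left _ _) (min_le_right _ _)
  have ht5 : 5 * t ≤ m := by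
    have h1 : t ≤ m / 5 := min_le_right _ _
    omega
  -- enumerations
  obtain ⟨a, hainj, haA⟩ := enum_finset A h2t
  obtain ⟨b, hbinj, hbB⟩ := enum_finset B htB
  have hAf : ∀ i j, x (a i) ≠ a j := fun i j => hAfree _ (haA i) _ (haA j)
  have hBf : ∀ i j, y (b i) ≠ b j := fun i j => hBfree _ (hbB i) _ (hbB j)
  -- sources
  set S₀ : Finset (Fin m) :=
    Finset.image b Finset.univ ∪ Finset.image (fun i => y (b i)) Finset.univ with hS₀
  have hbS₀ : ∀ i, b i ∈ S₀ := fun i => by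
    apply Finset.mem_union_left
    exact Finset.mem_image_of_mem b (Finset.mem_univ i)
  have hybS₀ : ∀ i, y (b i) ∈ S₀ := fun i => by
    apply Finset.mem_union_right
    exact Finset.mem_image_of_mem _ (Finset.mem_univ i)
  have hybinj : Function.Injective (fun i => y (b i)) := fun i j h => hbinj (y.injective h)
  have hS₀card : S₀.card = 2 * t := by
    rw [hS₀, Finset.card_union_of_disjoint, Finset.card_image_of_injective _ hbinj,
      Finset.card_image_of_injective _ hybinj]
    · simp only [Finset.card_univ, Fintype.card_fin]
      omega
    · rw [Finset.disjoint_left]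
      intro u hu1 hu2
      obtain ⟨i, _, hi⟩ := Finset.mem_image.mp hu1
      obtain ⟨j, _, hj⟩ := Finset.mem_image.mp hu2
      exact hBf j i (by rw [hi, hj])
  -- fresh points
  set C₀ : Finset (Fin m) := Finset.univ \ S₀ with hC₀
  have hC₀card : 3 * t ≤ C₀.card := by
    rw [hC₀, Finset.card_sdiff_of_subset (Finset.subset_univ _), hS₀card]
    simp only [Finset.card_univ, Fintype.card_fin]
    omega
  obtain ⟨w, hwinj, hwC⟩ := enum_finset C₀ hC₀card
  have hw' : ∀ p q : Fin (3*t), w p = w q → p.1 = q.1 :=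
    fun p q h => congrArg Fin.val (hwinj h)
  have hwS₀ : ∀ p, w p ∉ S₀ := by
    intro p hp
    have := hwC p
    rw [hC₀, Finset.mem_sdiff] at this
    exact this.2 hp
  -- the c and d families
  set idx0 : Fin t → Fin (3*t) := fun i => ⟨i.1, by have := i.isLt; omega⟩ with hidx0
  set idx1 : Fin t → Fin (3*t) := fun i => ⟨t + 2*i.1, by have := i.isLt; omega⟩ with hidx1
  set idx2 : Fin t → Fin (3*t) := fun i => ⟨t + 2*i.1 + 1, by have := i.isLt; omega⟩ with hidx2
  have hv0 : ∀ i, (idx0 i).1 = i.1 := fun i => rfl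
  have hv1 : ∀ i, (idx1 i).1 = t + 2*i.1 := fun i => rfl
  have hv2 : ∀ i, (idx2 i).1 = t + 2*i.1 + 1 := fun i => rfl
  set c : Fin t → Fin m := fun i => w (idx0 i) with hc
  set d : Fin t → Fin m := fun i =>
    if w (idx1 i) = y (c i) then w (idx2 i) else w (idx1 i) with hdd
  have hcinj : Function.Injective c := by
    intro i j h
    have := hw' _ _ h
    rw [hv0, hv0] at this
    exact Fin.ext this
  have hd_cases : ∀ i : Fin t, d i = w (idx1 i) ∨ d i = w (idx2 i) := by
    intro i
    simp only [hdd]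
    by_cases hcase : w (idx1 i) = y (c i)
    · right
      rw [if_pos hcase]
    · left
      rw [if_neg hcase]
  have hdinj : Function.Injective d := by
    intro i j h
    rcases hd_cases i with e1 | e1 <;> rcases hd_cases j with e2 | e2 <;>
      · rw [e1, e2] at h
        have := hw' _ _ h
        simp only [hv1, hv2] at this
        exact Fin.ext (by omega)
  have hdne : ∀ i, d i ≠ y (c i) := by
    intro i
    simp only [hdd]
    by_cases hcase : w (idx1 i) = y (c i)
    · rw [if_pos hcase]
      intro hcon
      rw [← hcase] at hcon
      have := hw' _ _ hcon
      simp only [hv1, hv2] at this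
      omega
    · rw [if_neg hcase]
      exact hcase
  have hcd : ∀ i j, c i ≠ d j := by
    intro i j hcon
    rcases hd_cases j with e2 | e2 <;>
      · rw [e2, hc] at hcon
        have := hw' _ _ hcon
        simp only [hv0, hv1, hv2] at this
        have hjt := j.isLt
        have hit := i.isLt
        omega
  have hcC₀ : ∀ i, c i ∉ S₀ := fun i => hwS₀ _
  have hdC₀ : ∀ i, d i ∉ S₀ := by
    intro i
    rcases hd_cases i with e1 | e1 <;> (rw [e1]; exact hwS₀ _)
  -- src and tgt
  set src : Fin (2*t) → Fin m := fun j =>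
    if h : j.1 < t then b ⟨j.1, h⟩ else y (b ⟨j.1 - t, by omega⟩) with hsrc
  set tgt : Fin (2*t) → Fin m := fun j =>
    if h : j.1 < t then c ⟨j.1, h⟩ else d ⟨j.1 - t, by omega⟩ with htgt
  have hsrcS₀ : ∀ j, src j ∈ S₀ := by
    intro j
    simp only [hsrc]
    by_cases h : j.1 < t
    · rw [dif_pos h]; exact hbS₀ _
    · rw [dif_neg h]; exact hybS₀ _
  have htgtS₀ : ∀ j, tgt j ∉ S₀ := by
    intro j
    simp only [htgt]
    by_cases h : j.1 < t
    · rw [dif_pos h]; exact hcC₀ _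
    · rw [dif_neg h]; exact hdC₀ _
  have hsrcinj : Function.Injective src := by
    intro j1 j2 h
    simp only [hsrc] at h
    by_cases h1 : j1.1 < t <;> by_cases h2 : j2.1 < t
    · rw [dif_pos h1, dif_pos h2] at h
      have := congrArg Fin.val (hbinj h)
      simp at this
      exact Fin.ext (by omega)
    · rw [dif_pos h1, dif_neg h2] at h
      exact absurd h.symm (hBf _ _)
    · rw [dif_neg h1, dif_pos h2] at h
      exact absurd h (hBf _ _)
    · rw [dif_neg h1, dif_neg h2] at h
      have := congrArg Fin.val (hbinj (y.injective h))
      simp at this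
      exact Fin.ext (by omega)
  have htgtinj : Function.Injective tgt := by
    intro j1 j2 h
    simp only [htgt] at h
    by_cases h1 : j1.1 < t <;> by_cases h2 : j2.1 < t
    · rw [dif_pos h1, dif_pos h2] at h
      have := congrArg Fin.val (hcinj h)
      simp at this
      exact Fin.ext (by omega)
    · rw [dif_pos h1, dif_neg h2] at h
      exact absurd h (hcd _ _)
    · rw [dif_neg h1, dif_pos h2] at h
      exact absurd h.symm (hcd _ _)
    · rw [dif_neg h1, dif_neg h2] at h
      have := congrArg Fin.val (hdinj h)
      simp at this
      exact Fin.ext (by omega)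
  have hst : ∀ j j', src j ≠ tgt j' := by
    intro j j' hcon
    exact htgtS₀ j' (hcon ▸ hsrcS₀ j)
  -- the prescription function
  set D₀ : Finset (Fin m) :=
    Finset.image a Finset.univ ∪ Finset.image (fun j => x (a j)) Finset.univ with hD₀
  set f₀ : Fin m → Fin m := fun p =>
    if h : ∃ j, a j = p then src (Classical.choose h)
    else if h' : ∃ j, x (a j) = p then tgt (Classical.choose h') else p with hf₀
  have hf₀a : ∀ j, f₀ (a j) = src j := by
    intro j
    simp only [hf₀]
    have h : ∃ j', a j' = a j := ⟨j, rfl⟩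
    simp only [dif_pos h]
    exact congrArg src (hainj (Classical.choose_spec h))
  have hf₀xa : ∀ j, f₀ (x (a j)) = tgt j := by
    intro j
    simp only [hf₀]
    have h1 : ¬ ∃ j', a j' = x (a j) := by
      rintro ⟨j', hj'⟩
      exact hAf j j' hj'.symm
    have h2 : ∃ j', x (a j') = x (a j) := ⟨j, rfl⟩
    simp only [dif_neg h1, dif_pos h2]
    exact congrArg tgt (hainj (x.injective (Classical.choose_spec h2)))
  have hmemD₀ : ∀ p, p ∈ D₀ ↔ (∃ j, a j = p) ∨ (∃ j, x (a j) = p) := by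
    intro p
    rw [hD₀, Finset.mem_union]
    simp [Finset.mem_image]
  have hInj : Set.InjOn f₀ (D₀ : Set (Fin m)) := by
    intro p1 hp1 p2 hp2 heq
    have hp1' := (hmemD₀ p1).mp hp1
    have hp2' := (hmemD₀ p2).mp hp2
    rcases hp1' with ⟨j1, rfl⟩ | ⟨j1, rfl⟩ <;> rcases hp2' with ⟨j2, rfl⟩ | ⟨j2, rfl⟩
    · rw [hf₀a, hf₀a] at heq
      rw [hsrcinj heq]
    · rw [hf₀a, hf₀xa] at heq
      exact absurd heq (hst _ _)
    · rw [hf₀xa, hf₀a] at heq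
      exact absurd heq.symm (hst _ _)
    · rw [hf₀xa, hf₀xa] at heq
      rw [htgtinj heq]
  obtain ⟨g, hg⟩ := extend_perm D₀ f₀ hInj
  have hga : ∀ j, g (a j) = src j := by
    intro j
    rw [hg _ ((hmemD₀ _).mpr (Or.inl ⟨j, rfl⟩)), hf₀a]
  have hgxa : ∀ j, g (x (a j)) = tgt j := by
    intro j
    rw [hg _ ((hmemD₀ _).mpr (Or.inr ⟨j, rfl⟩)), hf₀xa]
  set x' := g * x * g⁻¹ with hx'
  have hx'src : ∀ j, x' (src j) = tgt j := by
    intro j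
    have h1 : g⁻¹ (src j) = a j := by
      apply g.injective
      rw [show g (g⁻¹ (src j)) = src j from g.apply_symm_apply _, hga]
    rw [hx']
    show g (x (g⁻¹ (src j))) = tgt j
    rw [h1, hgxa]
  -- non-commutation points
  have hnc : ∀ i : Fin t, x' (y (b i)) ≠ y (x' (b i)) := by
    intro i
    have hi2t : i.1 < 2*t := by omega
    have hti2t : t + i.1 < 2*t := by omega
    have hsrc1 : src ⟨i.1, hi2t⟩ = b i := by
      simp only [hsrc]
      simp only [dif_pos i.isLt]
    have hsrc2 : src ⟨t + i.1, hti2t⟩ = y (b i) := by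
      simp only [hsrc]
      have hnge : ¬ (t + i.1 < t) := by omega
      simp only [dif_neg hnge]
      congr 1
      apply congrArg b
      exact Fin.ext (by simp)
    have htgt1 : tgt ⟨i.1, hi2t⟩ = c i := by
      simp only [htgt]
      simp only [dif_pos i.isLt]
    have htgt2 : tgt ⟨t + i.1, hti2t⟩ = d i := by
      simp only [htgt]
      have hnge : ¬ (t + i.1 < t) := by omega
      simp only [dif_neg hnge]
      congr 1
      exact Fin.ext (by simp)
    have e1 : x' (y (b i)) = d i := by rw [← hsrc2, hx'src, htgt2]
    have e2 : y (x' (b i)) = y (c i) := by rw [← hsrc1, hx'src, htgt1]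
    rw [e1, e2]
    exact hdne i
  -- conclude
  have hmain := supp_comm_ge x' y b hbinj hnc
  refine ⟨g, le_trans ?_ hmain⟩
  -- arithmetic: δ/6 - 5/m ≤ t/m
  have hAcardR : δ * m / 3 ≤ (A.card : ℝ) := by
    have : (x.support.card : ℝ) ≤ 3 * A.card := by exact_mod_cast hAcard
    linarith
  have hBcardR : δ * m / 3 ≤ (B.card : ℝ) := by
    have : (y.support.card : ℝ) ≤ 3 * B.card := by exact_mod_cast hBcard
    linarith
  have hb1 : δ * m / 6 - 5 ≤ ((A.card / 2 : ℕ) : ℝ) := by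
    have hn : A.card ≤ 2 * (A.card / 2) + 1 := by omega
    have hnR : (A.card : ℝ) ≤ 2 * ((A.card / 2 : ℕ) : ℝ) + 1 := by exact_mod_cast hn
    linarith
  have hb2 : δ * m / 6 - 5 ≤ ((B.card : ℕ) : ℝ) := by
    have : 0 ≤ δ * m := by positivity
    linarith
  have hb3 : δ * m / 6 - 5 ≤ ((m / 5 : ℕ) : ℝ) := by
    have hn : m ≤ 5 * (m / 5) + 4 := by omega
    have hnR : (m : ℝ) ≤ 5 * ((m / 5 : ℕ) : ℝ) + 4 := by exact_mod_cast hn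
    nlinarith [hmR]
  have htR : δ * m / 6 - 5 ≤ (t : ℝ) := by
    have hcases : t = A.card / 2 ∨ t = B.card ∨ t = m / 5 := by omega
    rcases hcases with h | h | h <;> rw [h]
    · exact hb1
    · exact hb2
    · exact hb3
  rw [show δ/6 - 5/(m:ℝ) = (δ * m / 6 - 5)/m by field_simp]
  exact (div_le_div_iff_of_pos_right hmR).mpr htR
end LemmaFMain
end SymPaper

namespace SymPaper
section Dichotomy
open scoped Classical

variable {k l : ℕ → ℕ}

lemma mkRP_mul (a b : ∀ n, Equiv.Perm (Fin (k n))) : mkRP (a * b) = mkRP a * mkRP b := rfl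

lemma mkRP_inv (a : ∀ n, Equiv.Perm (Fin (k n))) : mkRP a⁻¹ = (mkRP a)⁻¹ := rfl

lemma mkRP_eq_one_iff {a : ∀ n, Equiv.Perm (Fin (k n))} :
    mkRP a = 1 ↔ a ∈ symNull k Filter.atTop := QuotientGroup.eq_one_iff a

lemma mkRP_surj : ∀ x : SymRP k, ∃ a, mkRP a = x := fun x => Quot.exists_rep x

/-- The ultrafilter dichotomy: two elements with complementary supports cannot both have
non-null images under an isomorphism, along any ultrafilter below `atTop`. -/
lemma dichotomy (hl : Filter.Tendsto l Filter.atTop Filter.atTop) (φ : SymRP k ≃* SymRP l)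
    (S : Set ℕ) (U : Ultrafilter ℕ) (hU : (U : Filter ℕ) ≤ Filter.atTop)
    {p q : ∀ n, Equiv.Perm (Fin (k n))} {p' q' : ∀ n, Equiv.Perm (Fin (l n))}
    (hp : p ∈ symNull k (FS S)) (hq : q ∈ symNull k (FS Sᶜ))
    (hp' : φ (mkRP p) = mkRP p') (hq' : φ (mkRP q) = mkRP q')
    (hpU : ¬ Filter.Tendsto (fun n => hd (p' n) 1) (U : Filter ℕ) (nhds 0)) :
    Filter.Tendsto (fun n => hd (q' n) 1) (U : Filter ℕ) (nhds 0) := by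
  by_contra hqU
  obtain ⟨ε₁, hε₁, hA1⟩ := ultra_not_tendsto (fun n => hd_nonneg _ _) U hpU
  obtain ⟨ε₂, hε₂, hA2⟩ := ultra_not_tendsto (fun n => hd_nonneg _ _) U hqU
  set δ : ℝ := min (min ε₁ ε₂) 1 with hδdef
  have hδ : 0 < δ := by
    apply lt_min (lt_min hε₁ hε₂)
    norm_num
  have hδ1 : δ ≤ 1 := min_le_right _ _
  have hδε₁ : δ ≤ ε₁ := le_trans (min_le_left _ _) (min_le_left _ _)
  have hδε₂ : δ ≤ ε₂ := le_trans (min_le_left _ _) (min_le_right _ _)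
  -- the set of good coordinates
  set W : Set ℕ := {n | δ ≤ hd (p' n) 1} ∩ {n | δ ≤ hd (q' n) 1} ∩ {n | 60/δ ≤ (l n : ℝ)}
    with hWdef
  have hWU : W ∈ U := by
    apply Filter.inter_mem
    apply Filter.inter_mem
    · exact Filter.mem_of_superset hA1 (fun n hn => le_trans hδε₁ hn)
    · exact Filter.mem_of_superset hA2 (fun n hn => le_trans hδε₂ hn)
    · apply hU
      have := hl.eventually_ge_atTop (Nat.ceil (60/δ))
      apply this.mono
      intro n hn
      calc (60:ℝ)/δ ≤ (Nat.ceil (60/δ) : ℝ) := Nat.le_ceil _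
        _ ≤ (l n : ℝ) := by exact_mod_cast hn
  -- choose conjugators coordinatewise
  have hchoice : ∀ n, n ∈ W → ∃ g : Equiv.Perm (Fin (l n)),
      δ/6 - 5/(l n) ≤ hd (g * (p' n) * g⁻¹ * (q' n) * (g * (p' n) * g⁻¹)⁻¹ * (q' n)⁻¹) 1 := by
    intro n hn
    exact lemmaF (p' n) (q' n) hδ1 hn.1.1 hn.1.2
  set g : ∀ n, Equiv.Perm (Fin (l n)) := fun n =>
    if h : n ∈ W then Classical.choose (hchoice n h) else 1 with hgdef
  set Z : ∀ n, Equiv.Perm (Fin (l n)) :=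
    g * p' * g⁻¹ * q' * (g * p' * g⁻¹)⁻¹ * q'⁻¹ with hZdef
  have hZn : ∀ n, Z n = g n * p' n * (g n)⁻¹ * q' n * (g n * p' n * (g n)⁻¹)⁻¹ * (q' n)⁻¹ := by
    intro n
    rw [hZdef]
    rfl
  have hbig : ∀ n ∈ W, δ/12 ≤ hd (Z n) 1 := by
    intro n hn
    have hspec := Classical.choose_spec (hchoice n hn)
    have hgn : g n = Classical.choose (hchoice n hn) := by rw [hgdef]; exact dif_pos hn
    have hln : (60:ℝ)/δ ≤ (l n : ℝ) := hn.2
    have hlnpos : (0:ℝ) < (l n : ℝ) := lt_of_lt_of_le (by positivity) hln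
    have h512 : 5/((l n):ℝ) ≤ δ/12 := by
      rw [div_le_div_iff₀ hlnpos (by norm_num : (0:ℝ) < 12)]
      have h60 : 60 ≤ δ * (l n : ℝ) := by
        have := mul_le_mul_of_nonneg_left hln (le_of_lt hδ)
        calc (60:ℝ) = δ * (60/δ) := by field_simp
          _ ≤ δ * (l n : ℝ) := this
      linarith
    rw [hZn n, hgn]
    linarith [hspec]
  -- transport the conjugation through φ
  obtain ⟨u, hu⟩ := mkRP_surj (φ.symm (mkRP g))
  have hφu : φ (mkRP u) = mkRP g := by rw [hu, MulEquiv.apply_symm_apply]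
  set xc : ∀ n, Equiv.Perm (Fin (k n)) := u * p * u⁻¹ with hxcdef
  have hxcS : xc ∈ symNull k (FS S) := by
    rw [mem_symNull]
    have : ∀ n, hd (xc n) 1 = hd (p n) 1 := by
      intro n
      rw [hxcdef]
      have : (u * p * u⁻¹) n = u n * p n * (u n)⁻¹ := rfl
      rw [this, hd_conj_one]
    exact (Filter.tendsto_congr this).mpr hp
  have hφxc : φ (mkRP xc) = mkRP (g * p' * g⁻¹) := by
    rw [hxcdef]
    rw [mkRP_mul, mkRP_mul, mkRP_inv, map_mul, map_mul, map_inv, hφu, hp']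
    rw [mkRP_mul, mkRP_mul, mkRP_inv]
  -- the commutativity in the quotient
  have hcomm := commute_of_complementary hxcS hq
  have hcomm' : mkRP (g * p' * g⁻¹) * mkRP q' = mkRP q' * mkRP (g * p' * g⁻¹) := by
    rw [← hφxc, ← hq', ← map_mul, ← map_mul, hcomm]
  have hZ1 : mkRP Z = 1 := by
    have h2 : mkRP (g * p' * g⁻¹ * q') = mkRP (q' * (g * p' * g⁻¹)) := by
      rw [mkRP_mul (g * p' * g⁻¹) q', mkRP_mul q' (g * p' * g⁻¹), hcomm']
    have h3 : Z = (g * p' * g⁻¹ * q') * (q' * (g * p' * g⁻¹))⁻¹ := by rw [hZdef]; group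
    rw [h3, mkRP_mul (g * p' * g⁻¹ * q') (q' * (g * p' * g⁻¹))⁻¹, mkRP_inv, h2]
    group
  have hZnull : Z ∈ symNull l Filter.atTop := mkRP_eq_one_iff.mp hZ1
  have hZU : Filter.Tendsto (fun n => hd (Z n) 1) (U : Filter ℕ) (nhds 0) :=
    Filter.Tendsto.mono_left hZnull hU
  rw [tendsto_zero_iff (fun n => hd_nonneg _ _)] at hZU
  have hsmall := hZU (δ/12) (by positivity)
  have : W ∩ {n | hd (Z n) 1 < δ/12} ∈ U := Filter.inter_mem hWU hsmall
  obtain ⟨n, hnW, hnsmall⟩ := Filter.nonempty_of_mem this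
  exact absurd (hbig n hnW) (not_le.mpr hnsmall)

end Dichotomy
end SymPaper

namespace SymPaper
section MainExists
open scoped Classical
variable {k l : ℕ → ℕ}

lemma main_exists (hl : Filter.Tendsto l Filter.atTop Filter.atTop)
    (φ : SymRP k ≃* SymRP l) (S : Set ℕ) :
    ∃ T : Set ℕ,
      (∀ a a', φ (mkRP a) = mkRP a' → (a ∈ symNull k (FS S) ↔ a' ∈ symNull l (FS T))) ∧
      (∀ a a', φ (mkRP a) = mkRP a' → (a ∈ symNull k (FS Sᶜ) ↔ a' ∈ symNull l (FS Tᶜ))) := by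
  classical
  set cseq : ∀ n, Equiv.Perm (Fin (l n)) := fun n => finRotate (l n) with hcseq
  obtain ⟨z, hz⟩ := mkRP_surj (φ.symm (mkRP cseq))
  set zS := restr S z with hzSdef
  set zC := restr Sᶜ z with hzCdef
  have hzS_null : zS ∈ symNull k (FS Sᶜ) := restr_mem_null_compl S z
  have hzC_null : zC ∈ symNull k (FS S) := by
    have := restr_mem_null_compl Sᶜ z
    rwa [compl_compl] at this
  have hzC_null' : zC ∈ symNull k (FS Sᶜᶜ) := by
    rw [compl_compl]
    exact hzC_null
  obtain ⟨hseq, hh⟩ := mkRP_surj (φ (mkRP zS))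
  obtain ⟨kseq, hk'⟩ := mkRP_surj (φ (mkRP zC))
  have hprod : mkRP (hseq * kseq) = mkRP cseq := by
    rw [mkRP_mul, hh, hk', ← map_mul, ← mkRP_mul, restr_mul_restr_compl, hz,
      MulEquiv.apply_symm_apply]
  set T : Set ℕ := {n | hd (kseq n) 1 < 1/2} with hTdef
  -- forward lemma on the S side
  have LemA : ∀ a a', φ (mkRP a) = mkRP a' → a ∈ symNull k (FS S) →
      a' ∈ symNull l (FS T) := by
    intro a a' ha ha_null
    by_contra h'
    obtain ⟨ε, hε, hQ⟩ := infinite_of_not_tendsto_FS (fun n => hd_nonneg _ _) h'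
    set Q := {n | n ∈ T ∧ ε ≤ hd (a' n) 1} with hQdef
    haveI : (FS Q).NeBot := FS_neBot hQ
    set U : Ultrafilter ℕ := Ultrafilter.of (FS Q) with hUdef
    have hUF : (U : Filter ℕ) ≤ FS Q := Ultrafilter.of_le _
    have hUatTop : (U : Filter ℕ) ≤ Filter.atTop := le_trans hUF (FS_le_atTop Q)
    have hQU : Q ∈ U := hUF (Filter.mem_inf_of_right (Filter.mem_principal_self Q))
    have hTU : T ∈ U := Filter.mem_of_superset hQU (fun n hn => hn.1)
    have ha'U : ¬ Filter.Tendsto (fun n => hd (a' n) 1) (U : Filter ℕ) (nhds 0) := by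
      intro htd
      rw [tendsto_zero_iff (fun n => hd_nonneg _ _)] at htd
      obtain ⟨n, hn1, hn2⟩ := Filter.nonempty_of_mem (Filter.inter_mem hQU (htd ε hε))
      exact absurd hn1.2 (not_le.mpr hn2)
    have hhU : Filter.Tendsto (fun n => hd (hseq n) 1) (U : Filter ℕ) (nhds 0) :=
      dichotomy hl φ S U hUatTop ha_null hzS_null ha hh.symm ha'U
    have hρ : (hseq * kseq)⁻¹ * cseq ∈ symNull l Filter.atTop := mkRP_eq_iff.mp hprod
    have hρU : Filter.Tendsto (fun n => hd (((hseq * kseq)⁻¹ * cseq) n) 1)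
        (U : Filter ℕ) (nhds 0) := Filter.Tendsto.mono_left hρ hUatTop
    rw [tendsto_zero_iff (fun n => hd_nonneg _ _)] at hρU hhU
    have h8a := hρU (1/8) (by norm_num)
    have h8b := hhU (1/8) (by norm_num)
    have hl2 : ∀ᶠ n in (U : Filter ℕ), 2 ≤ l n := hUatTop (hl.eventually_ge_atTop 2)
    have hTev : ∀ᶠ n in (U : Filter ℕ), hd (kseq n) 1 < 1/2 := hTU
    have hbad : ∀ᶠ n in (U : Filter ℕ), False := by
      filter_upwards [h8a, h8b, hl2, hTev] with n hn1 hn2 hn3 hn4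
      have hcyc : hd (cseq n) 1 = 1 := hd_finRotate hn3
      have t1 : hd (cseq n) 1 ≤ hd (cseq n) (hseq n * kseq n) + hd (hseq n * kseq n) 1 :=
        hd_triangle _ _ _
      have t1' : hd (hseq n * kseq n) 1 ≤ hd (hseq n * kseq n) (kseq n) + hd (kseq n) 1 :=
        hd_triangle _ _ _
      have t2 : hd (cseq n) (hseq n * kseq n) = hd (((hseq * kseq)⁻¹ * cseq) n) 1 := by
        rw [hd_symm, hd_left_inv]
        rfl
      have t3 : hd (hseq n * kseq n) (kseq n) = hd (hseq n) 1 := hd_mul_cancel _ _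
      rw [hcyc] at t1
      rw [t2] at t1
      rw [t3] at t1'
      linarith
    exact (Ultrafilter.neBot U).ne (Filter.eventually_false_iff_eq_bot.mp hbad)
  -- forward lemma on the complement side
  have LemB : ∀ b b', φ (mkRP b) = mkRP b' → b ∈ symNull k (FS Sᶜ) →
      b' ∈ symNull l (FS Tᶜ) := by
    intro b b' hb hb_null
    by_contra h'
    obtain ⟨ε, hε, hQ⟩ := infinite_of_not_tendsto_FS (fun n => hd_nonneg _ _) h'
    set Q := {n | n ∈ Tᶜ ∧ ε ≤ hd (b' n) 1} with hQdef
    haveI : (FS Q).NeBot := FS_neBot hQ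
    set U : Ultrafilter ℕ := Ultrafilter.of (FS Q) with hUdef
    have hUF : (U : Filter ℕ) ≤ FS Q := Ultrafilter.of_le _
    have hUatTop : (U : Filter ℕ) ≤ Filter.atTop := le_trans hUF (FS_le_atTop Q)
    have hQU : Q ∈ U := hUF (Filter.mem_inf_of_right (Filter.mem_principal_self Q))
    have hTcU : Tᶜ ∈ U := Filter.mem_of_superset hQU (fun n hn => hn.1)
    have hb'U : ¬ Filter.Tendsto (fun n => hd (b' n) 1) (U : Filter ℕ) (nhds 0) := by
      intro htd
      rw [tendsto_zero_iff (fun n => hd_nonneg _ _)] at htd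
      obtain ⟨n, hn1, hn2⟩ := Filter.nonempty_of_mem (Filter.inter_mem hQU (htd ε hε))
      exact absurd hn1.2 (not_le.mpr hn2)
    have hkU : Filter.Tendsto (fun n => hd (kseq n) 1) (U : Filter ℕ) (nhds 0) :=
      dichotomy hl φ Sᶜ U hUatTop hb_null hzC_null' hb hk'.symm hb'U
    rw [tendsto_zero_iff (fun n => hd_nonneg _ _)] at hkU
    have hTU : T ∈ U := hkU (1/2) (by norm_num)
    obtain ⟨n, hn1, hn2⟩ := Filter.nonempty_of_mem (Filter.inter_mem hTU hTcU)
    exact hn2 hn1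
  refine ⟨T, ?_, ?_⟩
  · intro a a' ha
    refine ⟨LemA a a' ha, ?_⟩
    intro ha'
    obtain ⟨a'S, hA'⟩ := mkRP_surj (φ (mkRP (restr S a)))
    obtain ⟨a'C, hC'⟩ := mkRP_surj (φ (mkRP (restr Sᶜ a)))
    have haS : restr S a ∈ symNull k (FS Sᶜ) := restr_mem_null_compl S a
    have haC : restr Sᶜ a ∈ symNull k (FS S) := by
      have := restr_mem_null_compl Sᶜ a
      rwa [compl_compl] at this
    have h1 : a'S ∈ symNull l (FS Tᶜ) := LemB _ a'S hA'.symm haS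
    have h2 : a'C ∈ symNull l (FS T) := LemA _ a'C hC'.symm haC
    have hsum : mkRP (a'S * a'C) = mkRP a' := by
      rw [mkRP_mul, hA', hC', ← map_mul, ← mkRP_mul, restr_mul_restr_compl, ha]
    have h3 : a'S * a'C ∈ symNull l (FS T) := (null_congr hsum).mpr ha'
    have h4 : a'S ∈ symNull l (FS T) := by
      have := (symNull l (FS T)).mul_mem h3 ((symNull l (FS T)).inv_mem h2)
      simpa using this
    have h5 : a'S ∈ symNull l Filter.atTop := by
      rw [mem_symNull]
      exact tendsto_FS_compl_union (fun n => hd_nonneg _ _) T h4 h1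
    have h6 : mkRP (restr S a) = 1 := by
      apply φ.injective
      rw [map_one, ← hA']
      exact mkRP_eq_one_iff.mpr h5
    have h7 : restr S a ∈ symNull k (FS S) :=
      symNull_mono (FS_le_atTop S) (mkRP_eq_one_iff.mp h6)
    have h8 := (symNull k (FS S)).mul_mem h7 haC
    rwa [restr_mul_restr_compl] at h8
  · intro a a' ha
    refine ⟨LemB a a' ha, ?_⟩
    intro ha'
    obtain ⟨a'S, hA'⟩ := mkRP_surj (φ (mkRP (restr S a)))
    obtain ⟨a'C, hC'⟩ := mkRP_surj (φ (mkRP (restr Sᶜ a)))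
    have haS : restr S a ∈ symNull k (FS Sᶜ) := restr_mem_null_compl S a
    have haC : restr Sᶜ a ∈ symNull k (FS S) := by
      have := restr_mem_null_compl Sᶜ a
      rwa [compl_compl] at this
    have h1 : a'S ∈ symNull l (FS Tᶜ) := LemB _ a'S hA'.symm haS
    have h2 : a'C ∈ symNull l (FS T) := LemA _ a'C hC'.symm haC
    have hsum : mkRP (a'S * a'C) = mkRP a' := by
      rw [mkRP_mul, hA', hC', ← map_mul, ← mkRP_mul, restr_mul_restr_compl, ha]
    have h3 : a'S * a'C ∈ symNull l (FS Tᶜ) := (null_congr hsum).mpr ha'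
    have h4 : a'C ∈ symNull l (FS Tᶜ) := by
      have := (symNull l (FS Tᶜ)).mul_mem ((symNull l (FS Tᶜ)).inv_mem h1) h3
      simpa using this
    have h5 : a'C ∈ symNull l Filter.atTop := by
      rw [mem_symNull]
      exact tendsto_FS_compl_union (fun n => hd_nonneg _ _) T h2 h4
    have h6 : mkRP (restr Sᶜ a) = 1 := by
      apply φ.injective
      rw [map_one, ← hC']
      exact mkRP_eq_one_iff.mpr h5
    have h7 : restr Sᶜ a ∈ symNull k (FS Sᶜ) :=
      symNull_mono (FS_le_atTop Sᶜ) (mkRP_eq_one_iff.mp h6)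
    have h8 := (symNull k (FS Sᶜ)).mul_mem haS h7
    rwa [restr_mul_restr_compl] at h8
end MainExists
end SymPaper

namespace SymPaper
section Assemble
variable {k l : ℕ → ℕ}

lemma FS_bot {T : Set ℕ} (h : T.Finite) : FS T = ⊥ := by
  rw [FS, ← Filter.empty_mem_iff_bot, Filter.mem_inf_principal]
  have he : {x : ℕ | x ∈ T → x ∈ (∅ : Set ℕ)} = Tᶜ := by ext; simp
  rw [he, ← Nat.cofinite_eq_atTop]
  exact h.compl_mem_cofinite

/-- The transfer relation: `φ` matches nullity along `S` with nullity along `T`. -/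
def RelST (φ : SymRP k ≃* SymRP l) (S T : Set ℕ) : Prop :=
  ∀ a a', φ (mkRP a) = mkRP a' → (a ∈ symNull k (FS S) ↔ a' ∈ symNull l (FS T))

lemma relST_link (φ : SymRP k ≃* SymRP l) (x' : ∀ n, Equiv.Perm (Fin (l n))) :
    ∃ x, φ (mkRP x) = mkRP x' := by
  obtain ⟨x, hx⟩ := mkRP_surj (φ.symm (mkRP x'))
  exact ⟨x, by rw [hx, MulEquiv.apply_symm_apply]⟩

lemma relST_symm {φ : SymRP k ≃* SymRP l} {S T : Set ℕ} (h : RelST φ S T) :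
    RelST φ.symm T S := by
  intro a' a ha
  have : φ (mkRP a) = mkRP a' := by
    rw [← ha, MulEquiv.apply_symm_apply]
  exact (h a a' this).symm

lemma relST_uniq (hl : Filter.Tendsto l Filter.atTop Filter.atTop)
    {φ : SymRP k ≃* SymRP l} {S T T' : Set ℕ}
    (h1 : RelST φ S T) (h2 : RelST φ S T') : (symmDiff T T').Finite := by
  apply set_eq_of_null_eq hl
  intro a'
  obtain ⟨a, ha⟩ := relST_link φ a'
  exact (h1 a a' ha).symm.trans (h2 a a' ha)

lemma relST_congr_source {φ : SymRP k ≃* SymRP l} {S S' T : Set ℕ}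
    (hss' : (symmDiff S S').Finite) (h : RelST φ S T) : RelST φ S' T := by
  intro a a' ha
  rw [← FS_congr hss']
  exact h a a' ha

lemma relST_union {φ : SymRP k ≃* SymRP l} {S₁ S₂ T₁ T₂ : Set ℕ}
    (h1 : RelST φ S₁ T₁) (h2 : RelST φ S₂ T₂) : RelST φ (S₁ ∪ S₂) (T₁ ∪ T₂) := by
  intro a a' ha
  have e1 : a ∈ symNull k (FS (S₁ ∪ S₂)) ↔
      (a ∈ symNull k (FS S₁) ∧ a ∈ symNull k (FS S₂)) :=
    tendsto_FS_union (fun n => hd_nonneg _ _) S₁ S₂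
  have e2 : a' ∈ symNull l (FS (T₁ ∪ T₂)) ↔
      (a' ∈ symNull l (FS T₁) ∧ a' ∈ symNull l (FS T₂)) :=
    tendsto_FS_union (fun n => hd_nonneg _ _) T₁ T₂
  rw [e1, e2, h1 a a' ha, h2 a a' ha]

lemma relST_infinite (hk : Filter.Tendsto k Filter.atTop Filter.atTop)
    {φ : SymRP k ≃* SymRP l} {S T : Set ℕ}
    (h : RelST φ S T) (hS : S.Infinite) : T.Infinite := by
  intro hTfin
  obtain ⟨a', ha'⟩ := mkRP_surj (φ (mkRP (rotOn k S)))
  have hnull : a' ∈ symNull l (FS T) := by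
    rw [mem_symNull, FS_bot hTfin]
    exact Filter.tendsto_bot
  have := (h (rotOn k S) a' ha'.symm).mpr hnull
  exact rotOn_not_null hk hS (le_refl S) this

end Assemble
end SymPaper

namespace SymPaper

theorem iso_induces_boolean_automorphism' (k l : ℕ → ℕ)
    (hk : Filter.Tendsto k Filter.atTop Filter.atTop)
    (hl : Filter.Tendsto l Filter.atTop Filter.atTop)
    (φ : SymRP k ≃* SymRP l) :
    ∃ Θ : PFin ≃ PFin,
      (∀ x y : PFin, Θ (PFin.sup x y) = PFin.sup (Θ x) (Θ y)) ∧
      (∀ x : PFin, Θ (PFin.compl x) = PFin.compl (Θ x)) ∧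
      (∀ S T : Set ℕ, S.Infinite → Θ (PFin.mk S) = PFin.mk T → T.Infinite) ∧
      (∀ (a b : ∀ n, Equiv.Perm (Fin (k n))) (a' b' : ∀ n, Equiv.Perm (Fin (l n))),
        φ (mkRP a) = mkRP a' → φ (mkRP b) = mkRP b' →
        ∀ S : Set ℕ, S.Infinite → ∀ T : Set ℕ, Θ (PFin.mk S) = PFin.mk T →
          (limsupOn S (fun n => hd (a n) (b n)) = 0 ↔
            limsupOn T (fun n => hd (a' n) (b' n)) = 0)) := by
  classical
  choose χ hχ1 hχ2 using fun S => main_exists hl φ S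
  choose χ' hχ'1 hχ'2 using fun T => main_exists hk φ.symm T
  have hrel : ∀ S, RelST φ S (χ S) := hχ1
  have hrelc : ∀ S, RelST φ Sᶜ ((χ S)ᶜ) := hχ2
  have hrel' : ∀ T, RelST φ.symm T (χ' T) := hχ'1
  -- respects almost-equality
  have hresp : ∀ S S', finSetoid.r S S' → finSetoid.r (χ S) (χ S') := by
    intro S S' hss'
    exact relST_uniq hl (relST_congr_source hss' (hrel S)) (hrel S')
  have hresp' : ∀ T T', finSetoid.r T T' → finSetoid.r (χ' T) (χ' T') := by
    intro T T' htt'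
    exact relST_uniq hk (relST_congr_source htt' (hrel' T)) (hrel' T')
  set Θf : PFin → PFin := Quotient.map χ hresp with hΘf
  set Θg : PFin → PFin := Quotient.map χ' hresp' with hΘg
  have hΘfmk : ∀ S, Θf (Quotient.mk finSetoid S) = Quotient.mk finSetoid (χ S) :=
    fun S => rfl
  have hΘgmk : ∀ T, Θg (Quotient.mk finSetoid T) = Quotient.mk finSetoid (χ' T) :=
    fun T => rfl
  -- left and right inverse
  have hLI : ∀ S, finSetoid.r (χ' (χ S)) S := by
    intro S
    apply set_eq_of_null_eq hk
    intro a
    obtain ⟨a', ha'⟩ := mkRP_surj (φ (mkRP a))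
    have h1 := hrel S a a' ha'.symm
    have h2 := hrel' (χ S) a' a (by rw [ha', MulEquiv.symm_apply_apply])
    exact h2.symm.trans h1.symm
  have hRI : ∀ T, finSetoid.r (χ (χ' T)) T := by
    intro T
    apply set_eq_of_null_eq hl
    intro a'
    obtain ⟨a, ha⟩ := mkRP_surj (φ.symm (mkRP a'))
    have h1 := hrel' T a' a ha.symm
    have h2 := hrel (χ' T) a a' (by rw [ha, MulEquiv.apply_symm_apply])
    exact h2.symm.trans h1.symm
  have hli : Function.LeftInverse Θg Θf := by
    apply Quotient.ind
    intro S
    rw [hΘfmk, hΘgmk]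
    exact Quotient.sound (hLI S)
  have hri : Function.RightInverse Θg Θf := by
    apply Quotient.ind
    intro T
    rw [hΘgmk, hΘfmk]
    exact Quotient.sound (hRI T)
  refine ⟨⟨Θf, Θg, hli, hri⟩, ?_, ?_, ?_, ?_⟩
  · -- sup
    intro x y
    refine Quotient.inductionOn₂ x y ?_
    intro S S'
    show Θf (PFin.sup (Quotient.mk finSetoid S) (Quotient.mk finSetoid S')) =
      PFin.sup (Θf (Quotient.mk finSetoid S)) (Θf (Quotient.mk finSetoid S'))
    have hsupmk : ∀ A B : Set ℕ,
        PFin.sup (Quotient.mk finSetoid A) (Quotient.mk finSetoid B) =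
          Quotient.mk finSetoid (A ∪ B) := fun A B => rfl
    rw [hsupmk, hΘfmk, hΘfmk, hΘfmk, hsupmk]
    exact Quotient.sound (relST_uniq hl (hrel (S ∪ S')) (relST_union (hrel S) (hrel S')))
  · -- compl
    intro x
    refine Quotient.inductionOn x ?_
    intro S
    show Θf (PFin.compl (Quotient.mk finSetoid S)) =
      PFin.compl (Θf (Quotient.mk finSetoid S))
    have hcomplmk : ∀ A : Set ℕ,
        PFin.compl (Quotient.mk finSetoid A) = Quotient.mk finSetoid Aᶜ := fun A => rfl
    rw [hcomplmk, hΘfmk, hΘfmk, hcomplmk]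
    exact Quotient.sound (relST_uniq hl (hrel Sᶜ) (hrelc S))
  · -- infinite to infinite
    intro S T hS hΘ
    have hΘ' : Quotient.mk finSetoid (χ S) = Quotient.mk finSetoid T := by
      rw [← hΘfmk]
      exact hΘ
    have hr : finSetoid.r (χ S) T := Quotient.exact hΘ'
    have hχSinf : (χ S).Infinite := relST_infinite hk (hrel S) hS
    intro hTfin
    apply hχSinf
    have : χ S ⊆ T ∪ symmDiff (χ S) T := by
      intro x hx
      by_cases hxT : x ∈ T
      · exact Or.inl hxT
      · exact Or.inr (Or.inl ⟨hx, hxT⟩)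
    exact (hTfin.union hr).subset this
  · -- the main property
    intro a b a' b' ha hb S hS T hΘ
    have hΘ' : Quotient.mk finSetoid (χ S) = Quotient.mk finSetoid T := by
      rw [← hΘfmk]
      exact hΘ
    have hr : finSetoid.r (χ S) T := Quotient.exact hΘ'
    have hrelST : RelST φ S T := by
      intro u u' hu
      rw [← FS_congr hr]
      exact hrel S u u' hu
    have hT : T.Infinite := relST_infinite hk hrelST hS
    have hlink : φ (mkRP (a⁻¹ * b)) = mkRP (a'⁻¹ * b') := by
      have e1 : mkRP (a⁻¹ * b) = (mkRP a)⁻¹ * mkRP b := by rw [mkRP_mul, mkRP_inv]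
      have e2 : mkRP (a'⁻¹ * b') = (mkRP a')⁻¹ * mkRP b' := by rw [mkRP_mul, mkRP_inv]
      rw [e1, e2, map_mul, map_inv, ha, hb]
    rw [limsupOn_eq_zero_iff hS a b, limsupOn_eq_zero_iff hT a' b']
    exact hrelST _ _ hlink

end SymPaper


/-- every isomorphism between metric reduced products of symmetric groups induces
an automorphism `Θ` of `P(ℕ)/Fin` respecting the relations `=_S`. -/
theorem iso_induces_boolean_automorphism (k l : ℕ → ℕ)
    (hk : Tendsto k atTop atTop) (hl : Tendsto l atTop atTop)
    (φ : SymRP k ≃* SymRP l) :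
    ∃ Θ : PFin ≃ PFin,
      (∀ x y : PFin, Θ (PFin.sup x y) = PFin.sup (Θ x) (Θ y)) ∧
      (∀ x : PFin, Θ (PFin.compl x) = PFin.compl (Θ x)) ∧
      (∀ S T : Set ℕ, S.Infinite → Θ (PFin.mk S) = PFin.mk T → T.Infinite) ∧
      (∀ (a b : ∀ n, Equiv.Perm (Fin (k n))) (a' b' : ∀ n, Equiv.Perm (Fin (l n))),
        φ (mkRP a) = mkRP a' → φ (mkRP b) = mkRP b' →
        ∀ S : Set ℕ, S.Infinite → ∀ T : Set ℕ, Θ (PFin.mk S) = PFin.mk T →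
          (limsupOn S (fun n => hd (a n) (b n)) = 0 ↔
            limsupOn T (fun n => hd (a' n) (b' n)) = 0)) :=
  SymPaper.iso_induces_boolean_automorphism' k l hk hl φ

end SymPaper
end

section
/- Let (k_n)_n be a sequence of natural numbers with lim_n k_n = ∞. Then the following are equivalent: (1) every almost permutation f of ℕ with lim_n k_{f(n)}/k_n = 1 agrees with the identity on a cofinite subset of ℕ (i.e., (k_n)_n has no nontrivial asymptotically equivalent almost rearrangements); (2) there exist ε > 0 and N ∈ ℕ such that |log k_n − log k_m| ≥ ε for all n ≠ m with n, m ≥ N (i.e., liminf_{n ≠ m} |log k_n − log k_m| > 0). -/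
open Filter Equiv Set

namespace SymPaper

/-- `(kₙ)ₙ` has no nontrivial asymptotically equivalent almost rearrangement iff
`liminf_{n ≠ m} |log kₙ - log kₘ| > 0`. -/
theorem no_nontrivial_rearrangement_iff_log_separated (k : ℕ → ℕ)
    (hk : Tendsto k atTop atTop) :
    (∀ f : ℕ → ℕ, AlmostPerm f →
        Tendsto (fun n => (k (f n) : ℝ) / k n) atTop (nhds 1) → {n | f n ≠ n}.Finite) ↔
      (∃ ε : ℝ, 0 < ε ∧ ∃ N : ℕ, ∀ m n : ℕ, N ≤ m → N ≤ n → m ≠ n →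
        ε ≤ |Real.log (k n) - Real.log (k m)|) := by
  obtain ⟨N0, hN0⟩ : ∃ N0, ∀ n, N0 ≤ n → 1 ≤ k n :=
    eventually_atTop.mp (hk.eventually (eventually_ge_atTop 1))
  constructor
  · -- hard direction: contrapositive
    intro hL
    by_contra hR
    push_neg at hR
    have key : ∀ N : ℕ, ∀ i : ℕ, ∃ p : ℕ × ℕ,
        (N ≤ p.1 ∧ N ≤ p.2) ∧ p.1 ≠ p.2 ∧
        |Real.log (k p.2) - Real.log (k p.1)| < 1/(i+1) := by
      intro N i
      obtain ⟨a, b, h1, h2, h3, h4⟩ := hR (1/(i+1)) (by positivity) N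
      exact ⟨(a, b), ⟨h1, h2⟩, h3, h4⟩
    set P : ℕ → ℕ × ℕ := fun i => Nat.rec (Classical.choose (key N0 0))
      (fun i prev => Classical.choose (key (max prev.1 prev.2 + 1) (i+1))) i with hP
    set m : ℕ → ℕ := fun i => (P i).1 with hmdef
    set nn : ℕ → ℕ := fun i => (P i).2 with hnndef
    have hspec0 := Classical.choose_spec (key N0 0)
    have hspecS := fun i => Classical.choose_spec (key (max (P i).1 (P i).2 + 1) (i+1))
    have hne : ∀ i, m i ≠ nn i := by
      intro i; cases i with
      | zero => exact hspec0.2.1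
      | succ i => exact (hspecS i).2.1
    have hgap : ∀ i : ℕ, |Real.log (k (nn i)) - Real.log (k (m i))| < 1/(i+1) := by
      intro i; cases i with
      | zero => exact hspec0.2.2
      | succ i => exact (hspecS i).2.2
    set M : ℕ → ℕ := fun i => max (m i) (nn i) with hMdef
    have hstep : ∀ i, M i < m (i+1) ∧ M i < nn (i+1) := by
      intro i
      exact ⟨(hspecS i).1.1, (hspecS i).1.2⟩
    have hMmono : StrictMono M := strictMono_nat_of_lt_succ fun i =>
      lt_of_lt_of_le (hstep i).1 (le_max_left _ _)
    have hlt : ∀ i j, i < j → M i < m j ∧ M i < nn j := by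
      intro i j hij
      obtain ⟨j, rfl⟩ : ∃ j', j = j' + 1 := ⟨j - 1, by omega⟩
      have hij' : i ≤ j := by omega
      exact ⟨lt_of_le_of_lt (hMmono.monotone hij') (hstep j).1,
        lt_of_le_of_lt (hMmono.monotone hij') (hstep j).2⟩
    have hN0m : ∀ i, N0 ≤ m i ∧ N0 ≤ nn i := by
      intro i; induction i with
      | zero => exact hspec0.1
      | succ i ih =>
        have h1 := (hstep i).1
        have h2 := (hstep i).2
        have : m i ≤ M i := le_max_left _ _
        constructor <;> omega
    have hm_inj : Function.Injective m := by
      intro i j h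
      by_contra hij
      rcases Nat.lt_or_ge i j with h' | h'
      · have := (hlt i j h').1; have : m i ≤ M i := le_max_left _ _; omega
      · have h'' : j < i := by omega
        have := (hlt j i h'').1; have : m j ≤ M j := le_max_left _ _; omega
    have hnn_inj : Function.Injective nn := by
      intro i j h
      by_contra hij
      rcases Nat.lt_or_ge i j with h' | h'
      · have := (hlt i j h').2; have : nn i ≤ M i := le_max_right _ _; omega
      · have h'' : j < i := by omega
        have := (hlt j i h'').2; have : nn j ≤ M j := le_max_right _ _; omega
    have hdisj : ∀ i j, m i ≠ nn j := by
      intro i j h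
      rcases Nat.lt_trichotomy i j with h' | h' | h'
      · have := (hlt i j h').2; have : m i ≤ M i := le_max_left _ _; omega
      · exact hne i (h' ▸ h)
      · have := (hlt j i h').1; have : nn j ≤ M j := le_max_right _ _; omega
    classical
    set f : ℕ → ℕ := fun x =>
      if h : ∃ i, m i = x then nn (Classical.choose h)
      else if h : ∃ i, nn i = x then m (Classical.choose h) else x with hfdef
    have hfm : ∀ i, f (m i) = nn i := by
      intro i
      have h : ∃ j, m j = m i := ⟨i, rfl⟩
      have hc : Classical.choose h = i := hm_inj (Classical.choose_spec h)
      simp only [hfdef, dif_pos h, hc]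
    have hfn : ∀ i, f (nn i) = m i := by
      intro i
      have h1 : ¬ ∃ j, m j = nn i := by rintro ⟨j, hj⟩; exact hdisj j i hj
      have h2 : ∃ j, nn j = nn i := ⟨i, rfl⟩
      have hc : Classical.choose h2 = i := hnn_inj (Classical.choose_spec h2)
      simp only [hfdef, dif_neg h1, dif_pos h2, hc]
    have hfx : ∀ x, (¬ ∃ i, m i = x) → (¬ ∃ i, nn i = x) → f x = x := by
      intro x h1 h2
      simp only [hfdef, dif_neg h1, dif_neg h2]
    have hinv : ∀ x, f (f x) = x := by
      intro x
      by_cases h : ∃ i, m i = x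
      · obtain ⟨i, rfl⟩ := h; rw [hfm, hfn]
      · by_cases h' : ∃ i, nn i = x
        · obtain ⟨i, rfl⟩ := h'; rw [hfn, hfm]
        · rw [hfx x h h', hfx x h h']
    have hfinvol : Function.Involutive f := hinv
    have hfN0 : ∀ x, N0 ≤ x → N0 ≤ f x := by
      intro x hx
      by_cases h : ∃ i, m i = x
      · obtain ⟨i, rfl⟩ := h; rw [hfm]; exact (hN0m i).2
      · by_cases h' : ∃ i, nn i = x
        · obtain ⟨i, rfl⟩ := h'; rw [hfn]; exact (hN0m i).1
        · rw [hfx x h h']; exact hx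
    have hAP : AlmostPerm f := by
      constructor
      · rw [Set.range_eq_univ.mpr hfinvol.surjective, compl_univ]
        exact finite_empty
      · exact ⟨Set.univ, by simp, hfinvol.injective.injOn⟩
    have hdiff : Tendsto (fun x => Real.log (k (f x)) - Real.log (k x)) atTop (nhds 0) := by
      rw [NormedAddCommGroup.tendsto_nhds_zero]
      intro ε hε
      obtain ⟨I, hI⟩ := exists_nat_one_div_lt hε
      rw [eventually_atTop]
      refine ⟨M I + 1, fun x hx => ?_⟩
      rw [Real.norm_eq_abs]
      have hidx : ∀ i, (m i = x ∨ nn i = x) → I < i := by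
        intro i hi
        by_contra hle
        push_neg at hle
        have h1 : M i ≤ M I := hMmono.monotone hle
        have h2 : m i ≤ M i := le_max_left _ _
        have h3 : nn i ≤ M i := le_max_right _ _
        rcases hi with h | h <;> omega
      have hbnd : ∀ i, I < i → (1:ℝ)/(i+1) ≤ 1/(I+1) := by
        intro i hIi
        apply one_div_le_one_div_of_le (by positivity)
        have : (I:ℝ) ≤ i := by exact_mod_cast hIi.le
        linarith
      by_cases h : ∃ i, m i = x
      · obtain ⟨i, rfl⟩ := h
        rw [hfm]
        exact lt_of_lt_of_le (hgap i) (le_trans (hbnd i (hidx i (Or.inl rfl))) hI.le)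
      · by_cases h' : ∃ i, nn i = x
        · obtain ⟨i, rfl⟩ := h'
          rw [hfn, abs_sub_comm]
          exact lt_of_lt_of_le (hgap i) (le_trans (hbnd i (hidx i (Or.inr rfl))) hI.le)
        · rw [hfx x h h', sub_self, abs_zero]; exact hε
    have hratio : Tendsto (fun x => (k (f x) : ℝ) / k x) atTop (nhds 1) := by
      have hexp : Tendsto (fun x => Real.exp (Real.log (k (f x)) - Real.log (k x)))
          atTop (nhds 1) := by
        have := (Real.continuous_exp.tendsto 0).comp hdiff
        rw [Real.exp_zero] at this; exact this
      refine hexp.congr' ?_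
      rw [EventuallyEq, eventually_atTop]
      refine ⟨N0, fun x hx => ?_⟩
      have h1 : (0:ℝ) < k x := by exact_mod_cast Nat.lt_of_lt_of_le Nat.zero_lt_one (hN0 x hx)
      have h2 : (0:ℝ) < k (f x) := by
        exact_mod_cast Nat.lt_of_lt_of_le Nat.zero_lt_one (hN0 _ (hfN0 x hx))
      rw [Real.exp_sub, Real.exp_log h2, Real.exp_log h1]
    have hfin := hL f hAP hratio
    have hinf : (Set.range m).Infinite := Set.infinite_range_of_injective hm_inj
    refine hinf (hfin.subset ?_)
    rintro x ⟨i, rfl⟩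
    show f (m i) ≠ m i
    rw [hfm]
    exact fun h => hdisj i i h.symm
  · -- easy direction
    rintro ⟨ε, hε, N, hsep⟩ f ⟨hrange, S, hScofin, hSinj⟩ hratio
    have hsmall : {n | f n < N}.Finite := by
      have h1 : {n | f n < N} ⊆ ({n | f n < N} ∩ S) ∪ Sᶜ := by
        intro x hx; by_cases hxS : x ∈ S
        exacts [Or.inl ⟨hx, hxS⟩, Or.inr hxS]
      refine (Set.Finite.union ?_ hScofin).subset h1
      refine Set.Finite.of_finite_image ?_ (hSinj.mono inter_subset_right)
      refine (Set.finite_Iio N).subset ?_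
      rintro _ ⟨x, hx, rfl⟩
      exact hx.1
    have hEf : ∀ᶠ n in atTop, N ≤ f n := by
      rw [← Nat.cofinite_eq_atTop]
      exact hsmall.eventually_cofinite_notMem.mono fun n hn => not_lt.mp hn
    have hkpos : ∀ᶠ n in atTop, 1 ≤ k n := hk.eventually (eventually_ge_atTop 1)
    have hrpos : ∀ᶠ n in atTop, (1:ℝ)/2 < (k (f n) : ℝ) / k n :=
      hratio.eventually (eventually_gt_nhds (by norm_num))
    have hlog : Tendsto (fun n => Real.log ((k (f n) : ℝ) / k n)) atTop (nhds 0) := by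
      have := (Real.continuousAt_log one_ne_zero).tendsto.comp hratio
      rw [Real.log_one] at this; exact this
    have hlogsmall : ∀ᶠ n in atTop, |Real.log ((k (f n) : ℝ) / k n)| < ε := by
      have := NormedAddCommGroup.tendsto_nhds_zero.mp hlog ε hε
      simpa [Real.norm_eq_abs] using this
    have hfinal : ∀ᶠ n in atTop, f n = n := by
      filter_upwards [hEf, eventually_ge_atTop N, hkpos, hrpos, hlogsmall] with n h1 h2 h3 h4 h5
      by_contra hneq
      have hsep' := hsep (f n) n h1 h2 hneq
      have hkn : (0:ℝ) < k n := by exact_mod_cast Nat.lt_of_lt_of_le Nat.zero_lt_one h3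
      have hkfn : (0:ℝ) < k (f n) := by
        by_contra h
        push_neg at h
        have h0 : (k (f n) : ℝ) = 0 := le_antisymm h (Nat.cast_nonneg _)
        rw [h0, zero_div] at h4
        norm_num at h4
      rw [Real.log_div (ne_of_gt hkfn) (ne_of_gt hkn), abs_sub_comm] at h5
      linarith
    rw [← Nat.cofinite_eq_atTop, eventually_cofinite] at hfinal
    exact hfinal.subset fun n hn => hn


end SymPaper
end
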